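/- arXiv:1410.5755 — 6 statements merged into one kernel-verified Lean document; each statement's English description precedes it below -/
import Mathlib

section
/- Let G be a finite abelian group with dual group Ĝ, let F̃ : G → M_d(ℂ) be a family of matrices, and define the Fourier-transformed family F : Ĝ → M_d(ℂ) by F(χ) = (1/|G|) Σ_{g∈G} χ(g) F̃(g). Let ρ ∈ M_d(ℂ) and define the characteristic function φ_ρ : G → ℂ by φ_ρ(g) = Tr(ρ F̃(g)). Then the quasi-probability representation μ_ρ : Ĝ → ℂ, μ_ρ(χ) = Tr(ρ F(χ)), satisfies μ_ρ(χ) ≥ 0 for all χ ∈ Ĝ and Σ_{χ∈Ĝ} μ_ρ(χ) = 1 if and only if φ_ρ(e) = 1 and φ_ρ is positive definite on G, i.e., for every a : G → ℂ, Σ_{g,g'∈G} conj(a(g)) a(g') φ_ρ(g' g⁻¹) ≥ 0. -/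
open Finset ComplexConjugate
open scoped ComplexOrder

private lemma char_conj {G : Type*} [CommGroup G] [Fintype G] (χ : G →* ℂˣ) (g : G) :
    conj ((χ g : ℂ)) = (χ g⁻¹ : ℂ) := by
  have hpow : ((χ g : ℂ)) ^ Fintype.card G = 1 := by
    rw [← Units.val_pow_eq_pow_val, ← map_pow, pow_card_eq_one, map_one, Units.val_one]
  have hnorm : ‖(χ g : ℂ)‖ = 1 := Complex.norm_eq_one_of_pow_eq_one hpow Fintype.card_ne_zero
  rw [map_inv, Units.val_inv_eq_inv_val, Complex.inv_eq_conj hnorm]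

private lemma sum_char_eq {G : Type*} [CommGroup G] [Fintype G] [Fintype (G →* ℂˣ)]
    [DecidableEq G] (g : G) :
    ∑ χ : G →* ℂˣ, (χ g : ℂ) = if g = 1 then (Fintype.card G : ℂ) else 0 := by
  have : NeZero (Monoid.exponent G) := ⟨Monoid.exponent_ne_zero_of_finite⟩
  split_ifs with h
  · subst h
    simp only [map_one, Units.val_one, Finset.sum_const, card_univ, nsmul_eq_mul, mul_one]
    congr 1
    exact Fintype.card_congr
      (CommGroup.monoidHom_mulEquiv_of_hasEnoughRootsOfUnity G ℂ).some.toEquiv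
  · obtain ⟨ψ, hψ⟩ := CommGroup.exists_apply_ne_one_of_hasEnoughRootsOfUnity G ℂ h
    have key : (ψ g : ℂ) * ∑ χ : G →* ℂˣ, (χ g : ℂ) = ∑ χ : G →* ℂˣ, (χ g : ℂ) := by
      rw [Finset.mul_sum]
      exact Fintype.sum_equiv (Equiv.mulLeft ψ) _ _
        (fun χ ↦ by simp [Units.val_mul])
    have h1 : ((ψ g : ℂ) - 1) * ∑ χ : G →* ℂˣ, (χ g : ℂ) = 0 := by
      rw [sub_mul, one_mul, key, sub_self]
    have h2 : ((ψ g : ℂ) - 1) ≠ 0 :=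
      sub_ne_zero.mpr (fun hh ↦ hψ (Units.val_eq_one.mp hh))
    exact (mul_eq_zero.mp h1).resolve_left h2

/-- **Quantum Bochner's theorem, classical positivity part.**
Given a family `F̃ : G → M_d(ℂ)` over a finite abelian group `G`, its Fourier transform
`F(χ) = (1/|G|) ∑_g χ(g) F̃(g)` over the dual group `Ĝ = G →* ℂˣ`, an operator `ρ` with
characteristic function `φ_ρ(g) = Tr(ρ F̃(g))` and quasi-probability representation
`μ_ρ(χ) = Tr(ρ F(χ))`: the representation `μ_ρ` is nonnegative and normalized if and only if
`φ_ρ(e) = 1` and `φ_ρ` is positive definite on `G`. -/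
theorem quasiProb_nonneg_iff_charFun_posDef {G : Type*} [CommGroup G] [Fintype G]
    [Fintype (G →* ℂˣ)] {d : ℕ}
    (Ftil : G → Matrix (Fin d) (Fin d) ℂ) (ρ : Matrix (Fin d) (Fin d) ℂ)
    (F : (G →* ℂˣ) → Matrix (Fin d) (Fin d) ℂ)
    (hF : ∀ χ : G →* ℂˣ,
      F χ = (1 / (Fintype.card G : ℂ)) • ∑ g, (χ g : ℂ) • Ftil g)
    (φ : G → ℂ) (hφ : ∀ g, φ g = (ρ * Ftil g).trace)
    (μ : (G →* ℂˣ) → ℂ) (hμ : ∀ χ, μ χ = (ρ * F χ).trace) :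
    ((∀ χ, 0 ≤ μ χ) ∧ ∑ χ : G →* ℂˣ, μ χ = 1) ↔
      (φ 1 = 1 ∧
        ∀ a : G → ℂ, 0 ≤ ∑ g : G, ∑ g' : G, conj (a g) * a g' * φ (g' * g⁻¹)) := by
  classical
  set N : ℂ := (Fintype.card G : ℂ) with hN
  have hN0 : N ≠ 0 := Nat.cast_ne_zero.mpr Fintype.card_ne_zero
  have hμφ : ∀ χ : G →* ℂˣ, μ χ = (1 / N) * ∑ g, (χ g : ℂ) * φ g := by
    intro χ
    rw [hμ, hF, Matrix.mul_smul, Matrix.trace_smul, Matrix.mul_sum, Matrix.trace_sum]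
    simp only [Matrix.mul_smul, Matrix.trace_smul, smul_eq_mul, hφ, Finset.mul_sum]
  have hsum : ∀ f : G → ℂ, ∑ χ : G →* ℂˣ, ∑ g, (χ g : ℂ) * f g = N * f 1 := by
    intro f
    rw [Finset.sum_comm]
    calc ∑ g, ∑ χ : G →* ℂˣ, (χ g : ℂ) * f g
        = ∑ g, (∑ χ : G →* ℂˣ, (χ g : ℂ)) * f g := by simp [Finset.sum_mul]
      _ = ∑ g, (if g = 1 then N else 0) * f g := by simp_rw [sum_char_eq]; rfl
      _ = N * f 1 := by
          simp only [ite_mul, zero_mul]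
          rw [Finset.sum_ite_eq' Finset.univ (1 : G) (fun g ↦ N * f g)]
          simp
  have hsumμ : ∑ χ : G →* ℂˣ, μ χ = φ 1 := by
    simp_rw [hμφ]
    rw [← Finset.mul_sum, hsum φ]
    field_simp
  have hinv : ∀ h : G, ∑ χ : G →* ℂˣ, (χ h⁻¹ : ℂ) * μ χ = φ h := by
    intro h
    have step : ∀ χ : G →* ℂˣ, (χ h⁻¹ : ℂ) * μ χ = (1 / N) * ∑ g, (χ g : ℂ) * φ (g * h) := by
      intro χ
      rw [hμφ χ, Finset.mul_sum, Finset.mul_sum, Finset.mul_sum]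
      refine Fintype.sum_equiv (Equiv.mulRight h⁻¹) _ _ (fun x ↦ ?_)
      simp only [Equiv.coe_mulRight]
      have hc : (χ h⁻¹ : ℂ) * (χ x : ℂ) = (χ (x * h⁻¹) : ℂ) := by
        rw [← Units.val_mul, ← map_mul, mul_comm]
      have hx : x * h⁻¹ * h = x := inv_mul_cancel_right x h
      rw [hx]
      linear_combination (1 / N) * φ x * hc
    simp_rw [step]
    rw [← Finset.mul_sum, hsum (fun g ↦ φ (g * h))]
    field_simp; rw [one_mul]
  have hkey : ∀ a : G → ℂ,
      ∑ g : G, ∑ g' : G, conj (a g) * a g' * φ (g' * g⁻¹)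
        = ∑ χ : G →* ℂˣ, μ χ *
            ((∑ g, conj (a g) * (χ g : ℂ)) * conj (∑ g, conj (a g) * (χ g : ℂ))) := by
    intro a
    have expand : ∀ χ : G →* ℂˣ,
        μ χ * ((∑ g, conj (a g) * (χ g : ℂ)) * conj (∑ g, conj (a g) * (χ g : ℂ)))
          = ∑ g : G, ∑ g' : G, conj (a g) * a g' * ((χ ((g' * g⁻¹)⁻¹) : ℂ) * μ χ) := by
      intro χ
      rw [map_sum, Finset.sum_mul_sum, Finset.mul_sum]
      refine Finset.sum_congr rfl (fun g _ ↦ ?_)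
      rw [Finset.mul_sum]
      refine Finset.sum_congr rfl (fun g' _ ↦ ?_)
      rw [map_mul, Complex.conj_conj, char_conj]
      have hc : (χ ((g' * g⁻¹)⁻¹) : ℂ) = (χ g : ℂ) * (χ g'⁻¹ : ℂ) := by
        rw [← Units.val_mul, ← map_mul]
        congr 2
        rw [mul_inv_rev, inv_inv]
      rw [hc]
      ring
    calc ∑ g : G, ∑ g' : G, conj (a g) * a g' * φ (g' * g⁻¹)
        = ∑ g : G, ∑ χ : G →* ℂˣ, ∑ g' : G,
            conj (a g) * a g' * ((χ ((g' * g⁻¹)⁻¹) : ℂ) * μ χ) := by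
          refine Finset.sum_congr rfl (fun g _ ↦ ?_)
          rw [← Finset.sum_comm]
          refine Finset.sum_congr rfl (fun g' _ ↦ ?_)
          rw [← hinv (g' * g⁻¹), Finset.mul_sum]
      _ = ∑ χ : G →* ℂˣ, ∑ g : G, ∑ g' : G,
            conj (a g) * a g' * ((χ ((g' * g⁻¹)⁻¹) : ℂ) * μ χ) := Finset.sum_comm
      _ = _ := Finset.sum_congr rfl (fun χ _ ↦ (expand χ).symm)
  constructor
  · rintro ⟨hpos, hnorm⟩
    refine ⟨by rw [← hsumμ]; exact hnorm, fun a ↦ ?_⟩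
    rw [hkey a]
    refine Finset.sum_nonneg (fun χ _ ↦ mul_nonneg (hpos χ) ?_)
    rw [Complex.mul_conj]
    exact Complex.zero_le_real.mpr (Complex.normSq_nonneg _)
  · rintro ⟨hone, hpd⟩
    have hback : ∀ χ : G →* ℂˣ,
        ∑ g : G, ∑ g' : G,
          conj ((χ g : ℂ)) * (χ g' : ℂ) * φ (g' * g⁻¹) = N * (N * μ χ) := by
      intro χ
      have inner : ∀ g : G,
          ∑ g' : G, conj ((χ g : ℂ)) * (χ g' : ℂ) * φ (g' * g⁻¹) = N * μ χ := by
        intro g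
        have hterm : ∀ x : G,
            (χ x : ℂ) * φ x = conj ((χ g : ℂ)) * (χ (x * g) : ℂ) * φ (x * g * g⁻¹) := by
          intro x
          rw [char_conj]
          have hc : (χ g⁻¹ : ℂ) * (χ (x * g) : ℂ) = (χ x : ℂ) := by
            rw [← Units.val_mul, ← map_mul]
            congr 2
            rw [mul_comm x g, inv_mul_cancel_left]
          have hg : x * g * g⁻¹ = x := mul_inv_cancel_right x g
          rw [hg]
          linear_combination φ x * hc.symm
        calc ∑ g' : G, conj ((χ g : ℂ)) * (χ g' : ℂ) * φ (g' * g⁻¹)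
            = ∑ x : G, (χ x : ℂ) * φ x :=
              (Fintype.sum_equiv (Equiv.mulRight g) _ _ (fun x ↦ hterm x)).symm
          _ = N * μ χ := by rw [hμφ χ]; field_simp
      calc ∑ g : G, ∑ g' : G, conj ((χ g : ℂ)) * (χ g' : ℂ) * φ (g' * g⁻¹)
          = ∑ _g : G, N * μ χ := Finset.sum_congr rfl (fun g _ ↦ inner g)
        _ = N * (N * μ χ) := by
            rw [Finset.sum_const, card_univ, nsmul_eq_mul, hN, ← mul_assoc]
    refine ⟨fun χ ↦ ?_, by rw [hsumμ]; exact hone⟩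
    have h0 := hpd (fun g ↦ (χ g : ℂ))
    rw [hback χ] at h0
    have hcoef : (0 : ℂ) ≤ 1 / (N * N) := by
      rw [show (1 / (N * N) : ℂ)
          = (((1 / ((Fintype.card G : ℝ) * (Fintype.card G : ℝ))) : ℝ) : ℂ) by
        push_cast [hN]; ring]
      exact Complex.zero_le_real.mpr (by positivity)
    have hmu : μ χ = (1 / (N * N)) * (N * (N * μ χ)) := by field_simp
    rw [hmu]
    exact mul_nonneg hcoef h0
end

section
/- Let G be a finite abelian group and let Π : G → M_d(ℂ) be a projective frame: each Π(g) is unitary, Π(e) = 1, Π(g)Π(g') = α(g,g')Π(gg') for a 2-cocycle α : G×G → ℂ, Π(g⁻¹) = Π(g)⁻¹ for all g, and the set {Π(g) : g ∈ G} spans M_d(ℂ) as a complex vector space. Let ρ ∈ M_d(ℂ) be Hermitian, with characteristic function φ_ρ(g) = Tr(ρ Π(g)). Then ρ is positive semidefinite if and only if the G×G matrix M^Q with entries M^Q_{g,g'} = φ_ρ(g' g⁻¹) α(g⁻¹, g') is positive semidefinite. -/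
open Finset Matrix ComplexConjugate
open scoped ComplexOrder

/-- Trace of `Cᴴ * C` is nonnegative. -/
lemma trace_conjTranspose_mul_self_nonneg' {n : ℕ} (C : Matrix (Fin n) (Fin n) ℂ) :
    0 ≤ (Cᴴ * C).trace := by
  rw [Matrix.trace]
  apply Finset.sum_nonneg
  intro j _
  have : (Cᴴ * C).diag j = star (fun i => C i j) ⬝ᵥ (fun i => C i j) := by
    simp [Matrix.diag, Matrix.mul_apply, dotProduct, Matrix.conjTranspose_apply,
      mul_comm]
  rw [this]
  exact dotProduct_star_self_nonneg _

/-- **Quantum Bochner's theorem, quantum positivity part.**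
Let `P : G → M_d(ℂ)` be a projective frame over a finite abelian group `G`: unitary values,
`P(e) = 1`, cocycle relation `P(g)P(g') = α(g,g') P(gg')`, `P(g⁻¹) = P(g)⁻¹`, and with image
spanning `M_d(ℂ)`. A Hermitian `ρ` with characteristic function `φ_ρ(g) = Tr(ρ P(g))` is
positive semidefinite iff the matrix `M^Q_{g,g'} = φ_ρ(g' g⁻¹) α(g⁻¹, g')` is
positive semidefinite. -/
theorem posSemidef_iff_alpha_posDef {G : Type*} [CommGroup G] [Fintype G] {d : ℕ}
    (P : G → Matrix (Fin d) (Fin d) ℂ) (α : G → G → ℂ)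
    (hunit : ∀ g, (P g)ᴴ * P g = 1)
    (hone : P 1 = 1)
    (hcoc : ∀ g g', P g * P g' = α g g' • P (g * g'))
    (hinv : ∀ g, P g⁻¹ * P g = 1)
    (hspan : Submodule.span ℂ (Set.range P) = ⊤)
    (ρ : Matrix (Fin d) (Fin d) ℂ) (hρ : ρ.IsHermitian)
    (φ : G → ℂ) (hφ : ∀ g, φ g = (ρ * P g).trace) :
    ρ.PosSemidef ↔
      (Matrix.of fun g g' : G => φ (g' * g⁻¹) * α g⁻¹ g').PosSemidef := by
  classical
  set M : Matrix G G ℂ := Matrix.of fun g g' : G => φ (g' * g⁻¹) * α g⁻¹ g' with hMdef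
  -- `P g⁻¹ = (P g)ᴴ`
  have hPH : ∀ g : G, (P g)ᴴ = P g⁻¹ := by
    intro g
    have h1 : P g * (P g)ᴴ = 1 := mul_eq_one_comm.mp (hunit g)
    calc (P g)ᴴ = (P g⁻¹ * P g) * (P g)ᴴ := by rw [hinv, Matrix.one_mul]
      _ = P g⁻¹ * (P g * (P g)ᴴ) := Matrix.mul_assoc _ _ _
      _ = P g⁻¹ := by rw [h1, Matrix.mul_one]
  -- the key entrywise identity
  have hM : ∀ g g' : G, M g g' = (ρ * ((P g)ᴴ * P g')).trace := by
    intro g g'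
    have h2 : (P g)ᴴ * P g' = α g⁻¹ g' • P (g' * g⁻¹) := by
      rw [hPH, hcoc, mul_comm g⁻¹ g']
    have : M g g' = φ (g' * g⁻¹) * α g⁻¹ g' := rfl
    rw [this, h2, hφ, Matrix.mul_smul, Matrix.trace_smul, smul_eq_mul]
    ring
  -- quadratic form of M equals a trace
  have key : ∀ c : G → ℂ,
      star c ⬝ᵥ M.mulVec c = (ρ * (∑ g, c g • P g)ᴴ * (∑ g, c g • P g)).trace := by
    intro c
    have step1 : ρ * (∑ g, c g • P g)ᴴ = ∑ g, star (c g) • (ρ * (P g)ᴴ) := by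
      rw [Matrix.conjTranspose_sum, Finset.mul_sum]
      refine Finset.sum_congr rfl fun g _ => ?_
      rw [Matrix.conjTranspose_smul, Matrix.mul_smul]
    have expand : ρ * (∑ g, c g • P g)ᴴ * (∑ g, c g • P g)
        = ∑ g, ∑ g', (star (c g) * c g') • (ρ * ((P g)ᴴ * P g')) := by
      rw [step1, Finset.sum_mul]
      refine Finset.sum_congr rfl fun g _ => ?_
      rw [Matrix.smul_mul, Finset.mul_sum, Finset.smul_sum]
      refine Finset.sum_congr rfl fun g' _ => ?_
      rw [Matrix.mul_smul, smul_smul, Matrix.mul_assoc]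
    rw [expand]
    simp only [Matrix.trace_sum, Matrix.trace_smul, smul_eq_mul, Matrix.mulVec,
      dotProduct, Pi.star_apply]
    refine Finset.sum_congr rfl fun g _ => ?_
    rw [Finset.mul_sum]
    refine Finset.sum_congr rfl fun g' _ => ?_
    rw [hM]
    ring
  -- trace(ρ Aᴴ A) ≥ 0 when ρ is PSD
  constructor
  · intro hpsd
    have tr_nonneg : ∀ A : Matrix (Fin d) (Fin d) ℂ, 0 ≤ (ρ * Aᴴ * A).trace := by
      intro A
      have h := (hpsd.mul_mul_conjTranspose_same A).trace_nonneg
      rw [Matrix.mul_assoc]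
      rwa [Matrix.trace_mul_comm, ← Matrix.mul_assoc, Matrix.trace_mul_comm] at h
    refine Matrix.PosSemidef.of_dotProduct_mulVec_nonneg ?_ ?_
    · -- M is Hermitian
      refine Matrix.IsHermitian.ext fun g g' => ?_
      rw [hM, hM]
      have : star ((ρ * ((P g')ᴴ * P g)).trace) = ((ρ * ((P g')ᴴ * P g))ᴴ).trace := by
        rw [Matrix.trace_conjTranspose]
      rw [this]
      have : (ρ * ((P g')ᴴ * P g))ᴴ = (P g)ᴴ * P g' * ρ := by
        rw [Matrix.conjTranspose_mul, Matrix.conjTranspose_mul,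
          Matrix.conjTranspose_conjTranspose, hρ.eq]
      rw [this, Matrix.trace_mul_comm]
    · intro c
      rw [key c]
      exact tr_nonneg _
  · intro hMpsd
    refine Matrix.PosSemidef.of_dotProduct_mulVec_nonneg hρ fun x => ?_
    by_cases hx : x = 0
    · simp [hx]
    · -- A := x ⊗ x*  satisfies  Aᴴ A = s • A  with s = ⟪x,x⟫ > 0
      set A : Matrix (Fin d) (Fin d) ℂ := Matrix.vecMulVec x (star x) with hAdef
      set s : ℂ := star x ⬝ᵥ x with hsdef
      have hAA : Aᴴ * A = s • A := by
        ext i j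
        simp only [Matrix.mul_apply, Matrix.conjTranspose_apply, Matrix.smul_apply,
          Matrix.vecMulVec_apply, hAdef, Pi.star_apply, smul_eq_mul, hsdef,
          dotProduct, star_mul', star_star, Finset.sum_mul, Finset.mul_sum]
        refine Finset.sum_congr rfl fun k _ => ?_
        ring
      have htr : (ρ * A).trace = star x ⬝ᵥ ρ.mulVec x := by
        simp only [Matrix.trace, Matrix.diag, Matrix.mul_apply, hAdef,
          Matrix.vecMulVec_apply, dotProduct, Matrix.mulVec, Pi.star_apply]
        refine Finset.sum_congr rfl fun i _ => ?_
        rw [Finset.mul_sum]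
        refine Finset.sum_congr rfl fun j _ => ?_
        ring
      obtain ⟨c, hc⟩ := (Submodule.mem_span_range_iff_exists_fun ℂ).mp
        (show A ∈ Submodule.span ℂ (Set.range P) by rw [hspan]; trivial)
      have h0 : 0 ≤ star c ⬝ᵥ M.mulVec c := hMpsd.dotProduct_mulVec_nonneg c
      rw [key c, hc] at h0
      have hsq : ρ * Aᴴ * A = s • (ρ * A) := by
        rw [Matrix.mul_assoc, hAA, Matrix.mul_smul]
      rw [hsq, Matrix.trace_smul, smul_eq_mul, htr] at h0
      -- now deduce 0 ≤ q from 0 ≤ s * q, 0 ≤ s, s ≠ 0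
      set q : ℂ := star x ⬝ᵥ ρ.mulVec x with hqdef
      have hs0 : 0 ≤ s := dotProduct_star_self_nonneg x
      have hsne : s ≠ 0 := fun h => hx (dotProduct_star_self_eq_zero.mp h)
      have hsim : s.im = 0 := (Complex.nonneg_iff.mp hs0).2.symm
      have hsre : 0 < s.re := by
        rcases lt_or_eq_of_le (Complex.nonneg_iff.mp hs0).1 with h | h
        · exact h
        · exact absurd (Complex.ext h.symm hsim) hsne
      have h1 := Complex.nonneg_iff.mp h0
      rw [Complex.mul_re, Complex.mul_im, hsim] at h1
      simp only [zero_mul, mul_zero, sub_zero, add_zero] at h1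
      refine Complex.nonneg_iff.mpr ⟨?_, ?_⟩
      · exact nonneg_of_mul_nonneg_right h1.1 hsre
      · rcases mul_eq_zero.mp h1.2.symm with h | h
        · exact absurd h (ne_of_gt hsre)
        · exact h.symm
end

section
/- Let G be a finite abelian group with dual group Ĝ, and let Π : G → M_d(ℂ) be a projective frame with 2-cocycle α. Define F(χ) = (1/|G|) Σ_{g∈G} χ(g) Π(g) for χ ∈ Ĝ. Let ρ ∈ M_d(ℂ) be Hermitian with φ_ρ(g) = Tr(ρ Π(g)) and φ_ρ(e) = 1. Then ρ is a density matrix (positive semidefinite with trace normalization encoded by φ_ρ(e) = 1) whose quasi-probability representation μ_ρ(χ) = Tr(ρ F(χ)) is nonnegative for every χ ∈ Ĝ, if and only if both of the following G×G matrices are positive semidefinite: M^Q with entries M^Q_{g,g'} = φ_ρ(g' g⁻¹) α(g⁻¹, g'), and M^C with entries M^C_{g,g'} = φ_ρ(g' g⁻¹). -/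
open Finset Matrix ComplexConjugate
open scoped ComplexOrder

lemma aux_trace_nonneg {m : Type*} [Fintype m] [DecidableEq m] {A : Matrix m m ℂ}
    (hA : A.PosSemidef) : 0 ≤ A.trace := by
  rw [Matrix.trace]
  refine Finset.sum_nonneg fun i _ => ?_
  have := hA.dotProduct_mulVec_nonneg (Pi.single i 1)
  simpa [Matrix.mulVec, dotProduct, Pi.single_apply, Finset.sum_ite_eq] using this

lemma aux_nat_nonneg (n : ℕ) : (0 : ℂ) ≤ (n : ℂ) := by
  rw [show ((n:ℂ)) = ((n:ℝ):ℂ) by push_cast; ring]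
  exact Complex.zero_le_real.mpr (by positivity)

lemma aux_inv_nat_nonneg (n : ℕ) : 0 ≤ ((n : ℂ))⁻¹ := by
  rw [show ((n:ℂ)) = ((n:ℝ):ℂ) by push_cast; ring, ← Complex.ofReal_inv]
  exact Complex.zero_le_real.mpr (by positivity)

lemma aux_nonneg_of_nat_mul {n : ℕ} {z : ℂ} (h : 0 ≤ (n : ℂ) * z) (hn : (n:ℂ) ≠ 0) : 0 ≤ z := by
  have : z = ((n:ℂ))⁻¹ * ((n:ℂ) * z) := by field_simp
  rw [this]
  exact mul_nonneg (aux_inv_nat_nonneg n) h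

lemma aux_mul_conj_nonneg (z : ℂ) : 0 ≤ z * conj z := by
  rw [Complex.mul_conj]
  exact Complex.zero_le_real.mpr (Complex.normSq_nonneg z)

lemma aux_pull {ι : Type*} [Fintype ι] (c e : ℂ) (f h : ι → ℂ) :
    ∑ g : ι, ∑ g' : ι, c * (e * (f g * h g'))
      = c * (e * ((∑ g : ι, f g) * (∑ g' : ι, h g'))) := by
  calc ∑ g : ι, ∑ g' : ι, c * (e * (f g * h g'))
      = ∑ g : ι, c * e * f g * (∑ g' : ι, h g') := by
        refine Finset.sum_congr rfl fun g _ => ?_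
        rw [Finset.mul_sum]
        exact Finset.sum_congr rfl fun g' _ => by ring
    _ = c * (e * ((∑ g : ι, f g) * (∑ g' : ι, h g'))) := by
        rw [Finset.sum_mul, Finset.mul_sum, Finset.mul_sum]
        exact Finset.sum_congr rfl fun g _ => by ring

lemma aux_conj_char {G : Type*} [CommGroup G] [Fintype G] (χ : G →* ℂˣ) (g : G) :
    conj ((χ g : ℂ)) = ((χ g⁻¹ : ℂ)) := by
  have hpow : ((χ g : ℂ)) ^ Fintype.card G = 1 := by
    have h1 : χ g ^ Fintype.card G = 1 := by
      rw [← MonoidHom.map_pow, pow_card_eq_one, MonoidHom.map_one]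
    rw [← Units.val_pow_eq_pow_val, h1, Units.val_one]
  have h2 := Complex.norm_eq_one_of_pow_eq_one hpow Fintype.card_ne_zero
  have hnorm : Complex.normSq ((χ g : ℂ)) = 1 := by
    rw [Complex.normSq_eq_norm_sq, h2, one_pow]
  have hinvc : ((χ g⁻¹ : ℂ)) * ((χ g : ℂ)) = 1 := by
    have h3 : χ g⁻¹ * χ g = 1 := by
      rw [← MonoidHom.map_mul, inv_mul_cancel, MonoidHom.map_one]
    rw [← Units.val_mul, h3, Units.val_one]
  have h4 : ((χ g : ℂ)) * conj ((χ g : ℂ)) = 1 := by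
    rw [Complex.mul_conj, hnorm, Complex.ofReal_one]
  linear_combination (-(conj ((χ g : ℂ)))) * hinvc + ((χ g⁻¹ : ℂ)) * h4

lemma aux_char_sum {G : Type*} [CommGroup G] [Fintype G] [Fintype (G →* ℂˣ)]
    {k : G} (hk : k ≠ 1) : ∑ χ : G →* ℂˣ, ((χ k : ℂ)) = 0 := by
  have : Finite G := Finite.of_fintype G
  have : NeZero ((Monoid.exponent G : ℂ)) :=
    ⟨Nat.cast_ne_zero.mpr (Monoid.exponent_ne_zero_of_finite)⟩
  obtain ⟨ψ, hψ⟩ := CommGroup.exists_apply_ne_one_of_hasEnoughRootsOfUnity G ℂ hk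
  have h1 : ∑ χ : G →* ℂˣ, (((ψ * χ) k : ℂ)) = ∑ χ : G →* ℂˣ, ((χ k : ℂ)) :=
    Fintype.sum_equiv (Equiv.mulLeft ψ) _ _ (fun χ => rfl)
  have hS : ((ψ k : ℂ)) * ∑ χ : G →* ℂˣ, ((χ k : ℂ)) = ∑ χ : G →* ℂˣ, ((χ k : ℂ)) := by
    calc ((ψ k : ℂ)) * ∑ χ : G →* ℂˣ, ((χ k : ℂ)) = ∑ χ : G →* ℂˣ, ((ψ k : ℂ)) * ((χ k : ℂ)) := by
          rw [Finset.mul_sum]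
      _ = ∑ χ : G →* ℂˣ, (((ψ * χ) k : ℂ)) :=
          Finset.sum_congr rfl fun χ _ => by rw [MonoidHom.mul_apply, Units.val_mul]
      _ = ∑ χ : G →* ℂˣ, ((χ k : ℂ)) := h1
  have hne : ((ψ k : ℂ)) - 1 ≠ 0 := sub_ne_zero.mpr (fun h => hψ (Units.ext h))
  have h2 : (((ψ k : ℂ)) - 1) * ∑ χ : G →* ℂˣ, ((χ k : ℂ)) = 0 := by
    rw [sub_mul, one_mul, hS, sub_self]
  rcases mul_eq_zero.mp h2 with h | h
  · exact absurd h hne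
  · exact h

/-- **Quantum Bochner's theorem for projective frames.**
Let `P : G → M_d(ℂ)` be a projective frame over a finite abelian group `G` with 2-cocycle `α`,
`F(χ) = (1/|G|) ∑_g χ(g) P(g)` its Fourier frame over the dual group `Ĝ = G →* ℂˣ`, and `ρ`
Hermitian with characteristic function `φ_ρ(g) = Tr(ρ P(g))` normalized by `φ_ρ(e) = 1`.
Then `ρ` is a density matrix whose quasi-probability representation `μ_ρ(χ) = Tr(ρ F(χ))` is
nonnegative iff both `M^Q_{g,g'} = φ_ρ(g' g⁻¹) α(g⁻¹, g')` and `M^C_{g,g'} = φ_ρ(g' g⁻¹)` are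
positive semidefinite. -/
theorem bochner_representation {G : Type*} [CommGroup G] [Fintype G]
    [Fintype (G →* ℂˣ)] {d : ℕ}
    (P : G → Matrix (Fin d) (Fin d) ℂ) (α : G → G → ℂ)
    (hunit : ∀ g, (P g)ᴴ * P g = 1)
    (hone : P 1 = 1)
    (hcoc : ∀ g g', P g * P g' = α g g' • P (g * g'))
    (hinv : ∀ g, P g⁻¹ * P g = 1)
    (hspan : Submodule.span ℂ (Set.range P) = ⊤)
    (ρ : Matrix (Fin d) (Fin d) ℂ) (hρ : ρ.IsHermitian)
    (φ : G → ℂ) (hφ : ∀ g, φ g = (ρ * P g).trace)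
    (hnorm : φ 1 = 1)
    (F : (G →* ℂˣ) → Matrix (Fin d) (Fin d) ℂ)
    (hF : ∀ χ : G →* ℂˣ, F χ = (1 / (Fintype.card G : ℂ)) • ∑ g, (χ g : ℂ) • P g)
    (μ : (G →* ℂˣ) → ℂ) (hμ : ∀ χ, μ χ = (ρ * F χ).trace) :
    (ρ.PosSemidef ∧ ∀ χ, 0 ≤ μ χ) ↔
      ((Matrix.of fun g g' : G => φ (g' * g⁻¹) * α g⁻¹ g').PosSemidef ∧
        (Matrix.of fun g g' : G => φ (g' * g⁻¹)).PosSemidef) := by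
  classical
  have hPadj : ∀ g : G, (P g)ᴴ = P g⁻¹ := by
    intro g
    rw [← Matrix.inv_eq_left_inv (hunit g), Matrix.inv_eq_left_inv (hinv g)]
  have hQ : ∀ g g' : G, φ (g' * g⁻¹) * α g⁻¹ g' = (ρ * ((P g)ᴴ * P g')).trace := by
    intro g g'
    rw [hPadj, hcoc, Matrix.mul_smul, Matrix.trace_smul, smul_eq_mul,
      show g⁻¹ * g' = g' * g⁻¹ from mul_comm _ _, ← hφ, mul_comm]
  have hφconj : ∀ h : G, conj (φ h) = φ h⁻¹ := by
    intro h
    rw [hφ, hφ]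
    have h1 : (ρ * P h)ᴴ = P h⁻¹ * ρ := by
      rw [Matrix.conjTranspose_mul, hPadj, hρ.eq]
    calc conj ((ρ * P h).trace) = ((ρ * P h)ᴴ).trace := by
          rw [Matrix.trace_conjTranspose]; rfl
      _ = (P h⁻¹ * ρ).trace := by rw [h1]
      _ = (ρ * P h⁻¹).trace := Matrix.trace_mul_comm _ _
  have htrconj : ∀ A B : Matrix (Fin d) (Fin d) ℂ,
      conj ((ρ * (Aᴴ * B)).trace) = (ρ * (Bᴴ * A)).trace := by
    intro A B
    have h1 : (ρ * (Aᴴ * B))ᴴ = (Bᴴ * A) * ρ := by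
      rw [Matrix.conjTranspose_mul, Matrix.conjTranspose_mul,
        Matrix.conjTranspose_conjTranspose, hρ.eq]
    calc conj ((ρ * (Aᴴ * B)).trace) = ((ρ * (Aᴴ * B))ᴴ).trace := by
          rw [Matrix.trace_conjTranspose]; rfl
      _ = ((Bᴴ * A) * ρ).trace := by rw [h1]
      _ = (ρ * (Bᴴ * A)).trace := Matrix.trace_mul_comm _ _
  have hexp : ∀ x : G → ℂ,
      (ρ * ((∑ g, x g • P g)ᴴ * (∑ g', x g' • P g'))).trace
        = ∑ g, ∑ g', conj (x g) * x g' * (ρ * ((P g)ᴴ * P g')).trace := by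
    intro x
    rw [Matrix.conjTranspose_sum]
    simp only [Matrix.conjTranspose_smul, Finset.sum_mul, Finset.mul_sum,
      Matrix.smul_mul, Matrix.mul_smul, Matrix.trace_sum, Matrix.trace_smul,
      smul_smul, smul_eq_mul, RCLike.star_def]
    rw [Finset.sum_comm]
    exact Finset.sum_congr rfl fun g _ => Finset.sum_congr rfl fun g' _ => by ring
  have hQFQ : ∀ x : G → ℂ,
      star x ⬝ᵥ ((Matrix.of fun g g' : G => φ (g' * g⁻¹) * α g⁻¹ g') *ᵥ x)
        = (ρ * ((∑ g, x g • P g)ᴴ * (∑ g', x g' • P g'))).trace := by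
    intro x
    rw [hexp]
    simp only [dotProduct, Matrix.mulVec, Matrix.of_apply, Pi.star_apply, RCLike.star_def,
      Finset.mul_sum]
    refine Finset.sum_congr rfl fun g _ => Finset.sum_congr rfl fun g' _ => ?_
    rw [← hQ]; ring
  have hQFC : ∀ x : G → ℂ,
      star x ⬝ᵥ ((Matrix.of fun g g' : G => φ (g' * g⁻¹)) *ᵥ x)
        = ∑ g, ∑ g', conj (x g) * x g' * φ (g' * g⁻¹) := by
    intro x
    simp only [dotProduct, Matrix.mulVec, Matrix.of_apply, Pi.star_apply, RCLike.star_def,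
      Finset.mul_sum]
    exact Finset.sum_congr rfl fun g _ => Finset.sum_congr rfl fun g' _ => by ring
  have hn0 : ((Fintype.card G : ℂ)) ≠ 0 := Nat.cast_ne_zero.mpr Fintype.card_ne_zero
  have hm0 : ((Fintype.card (G →* ℂˣ) : ℂ)) ≠ 0 := Nat.cast_ne_zero.mpr Fintype.card_ne_zero
  have hμφ : ∀ χ : G →* ℂˣ, (Fintype.card G : ℂ) * μ χ = ∑ g, (χ g : ℂ) * φ g := by
    intro χ
    rw [hμ, hF]
    simp only [Matrix.mul_smul, Matrix.trace_smul, Matrix.mul_sum, Matrix.trace_sum,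
      smul_eq_mul, one_div]
    rw [← mul_assoc, mul_inv_cancel₀ hn0, one_mul]
    exact Finset.sum_congr rfl fun g _ => by rw [hφ]
  have hMQherm : (Matrix.of fun g g' : G => φ (g' * g⁻¹) * α g⁻¹ g').IsHermitian :=
    Matrix.IsHermitian.ext_iff.mpr fun g g' => by
      simp only [Matrix.of_apply]
      calc star (φ (g * g'⁻¹) * α g'⁻¹ g) = conj (φ (g * g'⁻¹) * α g'⁻¹ g) := rfl
        _ = conj ((ρ * ((P g')ᴴ * P g)).trace) := by rw [hQ g' g]
        _ = (ρ * ((P g)ᴴ * P g')).trace := htrconj _ _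
        _ = φ (g' * g⁻¹) * α g⁻¹ g' := (hQ g g').symm
  have hMCherm : (Matrix.of fun g g' : G => φ (g' * g⁻¹)).IsHermitian :=
    Matrix.IsHermitian.ext_iff.mpr fun g g' => by
      simp only [Matrix.of_apply]
      calc star (φ (g * g'⁻¹)) = conj (φ (g * g'⁻¹)) := rfl
        _ = φ ((g * g'⁻¹)⁻¹) := hφconj _
        _ = φ (g' * g⁻¹) := by rw [show (g * g'⁻¹)⁻¹ = g' * g⁻¹ by group]
  have hFour : ∀ h : G, (Fintype.card G : ℂ) * ∑ χ : G →* ℂˣ, μ χ * ((χ h⁻¹ : ℂ))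
      = (Fintype.card (G →* ℂˣ) : ℂ) * φ h := by
    intro h
    calc (Fintype.card G : ℂ) * ∑ χ : G →* ℂˣ, μ χ * ((χ h⁻¹ : ℂ))
        = ∑ χ : G →* ℂˣ, ((Fintype.card G : ℂ) * μ χ) * ((χ h⁻¹ : ℂ)) := by
          rw [Finset.mul_sum]; exact Finset.sum_congr rfl fun χ _ => by ring
      _ = ∑ χ : G →* ℂˣ, ∑ g : G, φ g * ((χ (g * h⁻¹) : ℂ)) := by
          refine Finset.sum_congr rfl fun χ _ => ?_
          rw [hμφ, Finset.sum_mul]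
          refine Finset.sum_congr rfl fun g _ => ?_
          rw [MonoidHom.map_mul, Units.val_mul]; ring
      _ = ∑ g : G, ∑ χ : G →* ℂˣ, φ g * ((χ (g * h⁻¹) : ℂ)) := Finset.sum_comm
      _ = ∑ g : G, φ g * ∑ χ : G →* ℂˣ, ((χ (g * h⁻¹) : ℂ)) :=
          Finset.sum_congr rfl fun g _ => (Finset.mul_sum _ _ _).symm
      _ = (Fintype.card (G →* ℂˣ) : ℂ) * φ h := by
          rw [Finset.sum_eq_single h]
          · rw [mul_inv_cancel]
            simp only [MonoidHom.map_one, Units.val_one]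
            rw [Finset.sum_const, Finset.card_univ, nsmul_eq_mul, mul_one, mul_comm]
          · intro g _ hg
            rw [aux_char_sum (fun hh => hg (mul_inv_eq_one.mp hh)), mul_zero]
          · intro hh
            exact absurd (Finset.mem_univ h) hh
  -- ρ PSD ⇒ M^Q PSD
  have hQpos_of_ρ : ρ.PosSemidef →
      (Matrix.of fun g g' : G => φ (g' * g⁻¹) * α g⁻¹ g').PosSemidef := by
    intro hρpsd
    refine .of_dotProduct_mulVec_nonneg hMQherm fun x => ?_
    rw [hQFQ x]
    rw [← Matrix.mul_assoc, Matrix.trace_mul_comm, ← Matrix.mul_assoc]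
    exact aux_trace_nonneg (hρpsd.mul_mul_conjTranspose_same _)
  -- M^Q PSD ⇒ ρ PSD
  have hρ_of_Q : (Matrix.of fun g g' : G => φ (g' * g⁻¹) * α g⁻¹ g').PosSemidef →
      ρ.PosSemidef := by
    intro hQpsd
    refine .of_dotProduct_mulVec_nonneg hρ fun v => ?_
    rcases Nat.eq_zero_or_pos d with hd | hd
    · subst hd
      simp [dotProduct]
    · set B : Matrix (Fin d) (Fin d) ℂ :=
        Matrix.of (fun i j : Fin d => if i = (⟨0, hd⟩ : Fin d) then conj (v j) else 0) with hBdef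
      obtain ⟨c, hc⟩ : ∃ c : G → ℂ, ∑ g, c g • P g = B := by
        have hB : B ∈ Submodule.span ℂ (Set.range P) := by
          rw [hspan]; exact Submodule.mem_top
        exact (Submodule.mem_span_range_iff_exists_fun ℂ).mp hB
      have h0 := hQpsd.dotProduct_mulVec_nonneg c
      rw [hQFQ c, hc] at h0
      have hBB : Bᴴ * B = Matrix.of (fun j k : Fin d => v j * conj (v k)) := by
        ext j k
        simp [hBdef, Matrix.mul_apply, Matrix.conjTranspose_apply, apply_ite,
          Finset.sum_ite_eq, mul_comm]
      rw [hBB] at h0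
      have hTr : (ρ * Matrix.of (fun j k : Fin d => v j * conj (v k))).trace
          = star v ⬝ᵥ ρ *ᵥ v := by
        simp only [Matrix.trace, Matrix.diag, Matrix.mul_apply, Matrix.of_apply,
          dotProduct, Matrix.mulVec, Pi.star_apply, RCLike.star_def, Finset.mul_sum]
        exact Finset.sum_congr rfl fun j _ => Finset.sum_congr rfl fun k _ => by ring
      rw [hTr] at h0
      exact h0
  -- M^C PSD ⇒ μ nonneg
  have hμ_of_C : (Matrix.of fun g g' : G => φ (g' * g⁻¹)).PosSemidef → ∀ χ, 0 ≤ μ χ := by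
    intro hCpsd χ
    have h0 := hCpsd.dotProduct_mulVec_nonneg (fun g => ((χ g : ℂ)))
    rw [hQFC] at h0
    have hcalc : (∑ g : G, ∑ g' : G, conj ((χ g : ℂ)) * ((χ g' : ℂ)) * φ (g' * g⁻¹))
        = (Fintype.card G : ℂ) * ((Fintype.card G : ℂ) * μ χ) := by
      calc ∑ g : G, ∑ g' : G, conj ((χ g : ℂ)) * ((χ g' : ℂ)) * φ (g' * g⁻¹)
          = ∑ _g : G, ∑ h : G, ((χ h : ℂ)) * φ h := by
            refine Finset.sum_congr rfl fun g _ => ?_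
            refine (Fintype.sum_equiv (Equiv.mulRight g) (fun h => ((χ h : ℂ)) * φ h) _
              fun h => ?_).symm
            simp only [Equiv.coe_mulRight]
            rw [aux_conj_char]
            have e1 : ((χ g⁻¹ : ℂ)) * ((χ (h * g) : ℂ)) = ((χ h : ℂ)) := by
              rw [← Units.val_mul, ← MonoidHom.map_mul, show g⁻¹ * (h * g) = h by rw [mul_comm h g, ← mul_assoc, inv_mul_cancel, one_mul]]
            have e2 : h * g * g⁻¹ = h := by group
            rw [e2, ← e1]
        _ = ∑ _g : G, (Fintype.card G : ℂ) * μ χ :=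
            Finset.sum_congr rfl fun g _ => by rw [← hμφ]
        _ = (Fintype.card G : ℂ) * ((Fintype.card G : ℂ) * μ χ) := by
            rw [Finset.sum_const, Finset.card_univ, nsmul_eq_mul]
    rw [hcalc] at h0
    exact aux_nonneg_of_nat_mul (aux_nonneg_of_nat_mul h0 hn0) hn0
  -- μ nonneg ⇒ M^C PSD
  have hC_of_μ : (∀ χ, 0 ≤ μ χ) → (Matrix.of fun g g' : G => φ (g' * g⁻¹)).PosSemidef := by
    intro hμpos
    refine .of_dotProduct_mulVec_nonneg hMCherm fun x => ?_
    have hcc : ∀ χ : G →* ℂˣ, (∑ g, x g * conj ((χ g : ℂ)))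
        = conj (∑ g, conj (x g) * ((χ g : ℂ))) := by
      intro χ
      rw [map_sum]
      exact Finset.sum_congr rfl fun g _ => by rw [RingHom.map_mul, Complex.conj_conj]
    have key : (Fintype.card (G →* ℂˣ) : ℂ) *
        (star x ⬝ᵥ ((Matrix.of fun g g' : G => φ (g' * g⁻¹)) *ᵥ x))
        = ∑ χ : G →* ℂˣ, (Fintype.card G : ℂ) * (μ χ *
            ((∑ g, conj (x g) * ((χ g : ℂ))) * (∑ g, x g * conj ((χ g : ℂ))))) := by
      rw [hQFC]
      calc (Fintype.card (G →* ℂˣ) : ℂ) * ∑ g : G, ∑ g', conj (x g) * x g' * φ (g' * g⁻¹)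
          = ∑ g : G, ∑ g' : G, conj (x g) * x g' *
              ((Fintype.card (G →* ℂˣ) : ℂ) * φ (g' * g⁻¹)) := by
            rw [Finset.mul_sum]
            refine Finset.sum_congr rfl fun g _ => ?_
            rw [Finset.mul_sum]
            exact Finset.sum_congr rfl fun g' _ => by ring
        _ = ∑ g : G, ∑ g' : G, ∑ χ : G →* ℂˣ, (Fintype.card G : ℂ) *
              (μ χ * ((conj (x g) * ((χ g : ℂ))) * (x g' * conj ((χ g' : ℂ))))) := by
            refine Finset.sum_congr rfl fun g _ => Finset.sum_congr rfl fun g' _ => ?_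
            rw [← hFour, Finset.mul_sum, Finset.mul_sum]
            refine Finset.sum_congr rfl fun χ _ => ?_
            have hx : ((χ ((g' * g⁻¹)⁻¹) : ℂ)) = ((χ g : ℂ)) * conj ((χ g' : ℂ)) := by
              rw [show (g' * g⁻¹)⁻¹ = g * g'⁻¹ by group, MonoidHom.map_mul, Units.val_mul,
                aux_conj_char]
            rw [hx]; ring
        _ = ∑ g : G, ∑ χ : G →* ℂˣ, ∑ g' : G, (Fintype.card G : ℂ) *
              (μ χ * ((conj (x g) * ((χ g : ℂ))) * (x g' * conj ((χ g' : ℂ))))) :=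
            Finset.sum_congr rfl fun g _ => Finset.sum_comm
        _ = ∑ χ : G →* ℂˣ, ∑ g : G, ∑ g' : G, (Fintype.card G : ℂ) *
              (μ χ * ((conj (x g) * ((χ g : ℂ))) * (x g' * conj ((χ g' : ℂ))))) :=
            Finset.sum_comm
        _ = ∑ χ : G →* ℂˣ, (Fintype.card G : ℂ) * (μ χ *
              ((∑ g, conj (x g) * ((χ g : ℂ))) * (∑ g, x g * conj ((χ g : ℂ))))) := by
            refine Finset.sum_congr rfl fun χ _ => ?_
            exact aux_pull (Fintype.card G : ℂ) (μ χ)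
              (fun g => conj (x g) * ((χ g : ℂ))) (fun g => x g * conj ((χ g : ℂ)))
    have hT : 0 ≤ ∑ χ : G →* ℂˣ, (Fintype.card G : ℂ) * (μ χ *
        ((∑ g, conj (x g) * ((χ g : ℂ))) * (∑ g, x g * conj ((χ g : ℂ))))) := by
      refine Finset.sum_nonneg fun χ _ => ?_
      refine mul_nonneg (aux_nat_nonneg _) (mul_nonneg (hμpos χ) ?_)
      rw [hcc χ]
      exact aux_mul_conj_nonneg _
    rw [← key] at hT
    exact aux_nonneg_of_nat_mul hT hm0
  constructor
  · rintro ⟨h1, h2⟩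
    exact ⟨hQpos_of_ρ h1, hC_of_μ h2⟩
  · rintro ⟨h1, h2⟩
    exact ⟨hρ_of_Q h1, hμ_of_C h2⟩
end

section
/- Let G be a finite abelian group. There exist d ≥ 1 and a projective unitary representation Π : G → M_d(ℂ) that is both faithful (Π(g) is a scalar multiple of the identity only when g = e) and irreducible (the only matrices commuting with Π(g) for every g ∈ G are the scalar multiples of the identity) if and only if G is isomorphic to H × H for some finite abelian group H; moreover, in that case one may take d = |H|, so that |G| = d². -/
open Finset Matrix ComplexConjugate
open scoped ComplexOrder

/-- Weyl–Heisenberg representation over index type `H`. -/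
lemma weyl0 (H : Type) [CommGroup H] [Fintype H] [DecidableEq H] (χ : H → H → ℂˣ)
    (hbm1 : ∀ a b c, χ (a * b) c = χ a c * χ b c)
    (hbm2 : ∀ a b c, χ a (b * c) = χ a b * χ a c)
    (hnd1 : ∀ a, (∀ b, χ a b = 1) → a = 1)
    (hnd2 : ∀ b, (∀ a, χ a b = 1) → b = 1) :
    ∃ (P : H × H → Matrix H H ℂ) (α : H × H → H × H → ℂ),
      (∀ g, (P g)ᴴ * P g = 1) ∧
      P 1 = 1 ∧
      (∀ g g', P g * P g' = α g g' • P (g * g')) ∧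
      (∀ g, (∃ c : ℂ, P g = c • (1 : Matrix H H ℂ)) → g = 1) ∧
      (∀ M : Matrix H H ℂ, (∀ g, M * P g = P g * M) →
        ∃ c : ℂ, M = c • (1 : Matrix H H ℂ)) := by
  -- basic consequences
  have hχ1r : ∀ a, χ a 1 = 1 := fun a => by
    have := hbm2 a 1 1; rw [mul_one] at this; exact (mul_eq_left.mp this.symm)
  have hχ1l : ∀ b, χ 1 b = 1 := fun b => by
    have := hbm1 1 1 b; rw [one_mul] at this; exact (mul_eq_left.mp this.symm)
  have hχpow : ∀ a b (k : ℕ), χ a b ^ k = χ a (b ^ k) := fun a b k =>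
    (map_pow (MonoidHom.mk' (χ a) (fun x y => hbm2 a x y)) b k).symm
  have hcard : (Fintype.card H) ≠ 0 := Fintype.card_ne_zero
  have habs : ∀ a b, ‖(χ a b : ℂ)‖ = 1 := by
    intro a b
    refine Complex.norm_eq_one_of_pow_eq_one (n := Fintype.card H) ?_ hcard
    have h1 : χ a b ^ Fintype.card H = 1 := by rw [hχpow, pow_card_eq_one, hχ1r]
    rw [← Units.val_pow_eq_pow_val, h1, Units.val_one]
  have hconj : ∀ a b, conj (χ a b : ℂ) * (χ a b : ℂ) = 1 := by
    intro a b
    have h1 : Complex.normSq (χ a b : ℂ) = 1 := by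
      rw [Complex.normSq_eq_norm_sq, habs, one_pow]
    rw [mul_comm, Complex.mul_conj, h1, Complex.ofReal_one]
  have hstar : ∀ (c : Prop) [Decidable c] (v : ℂ),
      star (if c then v else 0) = if c then conj v else 0 := by
    intro c _ v; split <;> simp
  set P : H × H → Matrix H H ℂ :=
    fun g => Matrix.of fun x y => if x = g.1 * y then (χ g.2 y : ℂ) else 0 with hP
  have hPapp : ∀ g x y, P g x y = if x = g.1 * y then (χ g.2 y : ℂ) else 0 := fun g x y => rfl
  refine ⟨P, fun g g' => (χ g.2 g'.1 : ℂ), ?_, ?_, ?_, ?_, ?_⟩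
  · -- unitary
    intro g
    ext x z
    rw [Matrix.mul_apply]
    simp only [conjTranspose_apply, hPapp, hstar, one_apply]
    rw [Finset.sum_eq_single (g.1 * x)]
    · by_cases h : x = z
      · subst h; simp [hconj]
      · have h2 : ¬ (g.1 * x = g.1 * z) := fun hc => h (mul_left_cancel hc)
        simp [h2, h]
    · intro b _ hb
      rw [if_neg (fun hc : b = g.1 * x => hb hc), zero_mul]
    · simp
  · -- identity
    ext x y
    simp only [hPapp, one_apply, Prod.fst_one, Prod.snd_one, one_mul]
    by_cases h : x = y <;> simp [h, hχ1l]
  · -- product rule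
    intro g g'
    ext x z
    rw [Matrix.mul_apply]
    simp only [hPapp, Matrix.smul_apply, smul_eq_mul, Prod.fst_mul, Prod.snd_mul]
    rw [Finset.sum_eq_single (g'.1 * z)]
    · by_cases h : x = g.1 * (g'.1 * z)
      · have h' : x = g.1 * g'.1 * z := by rw [h, mul_assoc]
        rw [if_pos h, if_pos rfl, if_pos h']
        rw [hbm2, hbm1]
        push_cast
        ring
      · have h' : ¬ (x = g.1 * g'.1 * z) := by rw [mul_assoc]; exact h
        rw [if_neg h, if_neg h', zero_mul, mul_zero]
    · intro b _ hb
      rw [if_neg (fun hc : b = g'.1 * z => hb hc), mul_zero]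
    · simp
  · -- faithful
    rintro ⟨a, b⟩ ⟨c, hc⟩
    have hab : ∀ x y : H, (if x = a * y then (χ b y : ℂ) else 0)
        = c * (if x = y then 1 else 0) := by
      intro x y
      have := congrArg (fun M => M x y) hc
      simpa [hPapp, one_apply, mul_ite] using this
    have ha : a = 1 := by
      by_contra ha
      have h3 := hab a 1
      rw [if_pos (by rw [mul_one]), if_neg ha, mul_zero] at h3
      have : ((1 : ℂˣ) : ℂ) = 0 := by rw [← hχ1r b]; exact h3
      simpa using this
    subst ha
    have hc1 : c = 1 := by
      have h3 := hab 1 1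
      rw [if_pos (by rw [one_mul]), if_pos rfl, mul_one, hχ1r] at h3
      simpa using h3.symm
    subst hc1
    have hb : b = 1 := by
      refine hnd1 b (fun y => ?_)
      have h3 := hab y y
      rw [if_pos (by rw [one_mul]), if_pos rfl, one_mul] at h3
      exact Units.ext (by rw [h3, Units.val_one])
    rw [hb]; rfl
  · -- irreducible
    intro M hM
    -- step 1: M is diagonal
    have hdiagonal : ∀ x y : H, x ≠ y → M x y = 0 := by
      intro x y hxy
      have hz : x * y⁻¹ ≠ 1 := fun hc => hxy (by rwa [mul_inv_eq_one] at hc)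
      obtain ⟨b, hb⟩ : ∃ b, χ b (x * y⁻¹) ≠ 1 := by
        by_contra hcon; push_neg at hcon; exact hz (hnd2 _ hcon)
      have hchi : (χ b x : ℂ) ≠ (χ b y : ℂ) := by
        intro hceq
        apply hb
        have h4 : χ b x = χ b y := Units.ext hceq
        have h2 : χ b (x * y⁻¹) * χ b y = 1 * χ b y := by
          rw [← hbm2, inv_mul_cancel_right, h4, one_mul]
        exact mul_right_cancel h2
      have h5 := congrArg (fun N => N x y) (hM (1, b))
      simp only [Matrix.mul_apply, hPapp] at h5
      have e1 : ∀ k : H, (M x k * if k = (1, b).1 * y then ((χ (1, b).2 y : ℂˣ) : ℂ) else 0)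
          = (if k = y then M x k * (χ b y : ℂ) else 0) := by
        intro k
        by_cases h : k = y
        · rw [if_pos (by rw [h, one_mul]), if_pos h]
        · rw [if_neg (fun hc : k = (1, b).1 * y => h (by rwa [one_mul] at hc)), if_neg h,
            mul_zero]
      have e2 : ∀ k : H, ((if x = (1, b).1 * k then ((χ (1, b).2 k : ℂˣ) : ℂ) else 0) * M k y)
          = (if k = x then (χ b x : ℂ) * M k y else 0) := by
        intro k
        by_cases h : k = x
        · subst h; rw [if_pos (by rw [one_mul]), if_pos rfl]
        · rw [if_neg (fun hc : x = (1, b).1 * k => h (by rw [one_mul] at hc; exact hc.symm)),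
            if_neg h, zero_mul]
      rw [Finset.sum_congr rfl (fun k _ => e1 k), Finset.sum_congr rfl (fun k _ => e2 k),
        Finset.sum_ite_eq' univ y (fun k => M x k * (χ b y : ℂ)),
        Finset.sum_ite_eq' univ x (fun k => (χ b x : ℂ) * M k y)] at h5
      simp only [mem_univ, if_pos] at h5
      -- h5 : M x y * χ b y = χ b x * M x y
      by_contra hM0
      apply hchi
      have h6 : M x y * (χ b x : ℂ) = M x y * (χ b y : ℂ) := by
        rw [h5, mul_comm]
      exact mul_left_cancel₀ hM0 h6
    -- step 2: diagonal entries are constant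
    have hconst : ∀ x : H, M x x = M 1 1 := by
      intro x
      have h5 := congrArg (fun N => N x 1) (hM (x, 1))
      simp only [Matrix.mul_apply, hPapp] at h5
      have e1 : ∀ k : H, (M x k * if k = (x, 1).1 * 1 then ((χ (x, 1).2 1 : ℂˣ) : ℂ) else 0)
          = (if k = x then M x k else 0) := by
        intro k
        by_cases h : k = x
        · rw [if_pos (by rw [h, mul_one]), if_pos h, hχ1l, Units.val_one, mul_one]
        · rw [if_neg (fun hc : k = (x, 1).1 * 1 => h (by rwa [mul_one] at hc)), if_neg h,
            mul_zero]
      have e2 : ∀ k : H, ((if x = (x, 1).1 * k then ((χ (x, 1).2 k : ℂˣ) : ℂ) else 0) * M k 1)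
          = (if k = 1 then M k 1 else 0) := by
        intro k
        by_cases h : k = 1
        · subst h; rw [if_pos (by rw [mul_one]), if_pos rfl, hχ1l, Units.val_one, one_mul]
        · rw [if_neg (fun hc : x = (x, 1).1 * k =>
            h (mul_left_cancel (a := x) (by rw [mul_one]; exact hc)).symm), if_neg h, zero_mul]
      rw [Finset.sum_congr rfl (fun k _ => e1 k), Finset.sum_congr rfl (fun k _ => e2 k),
        Finset.sum_ite_eq' univ x (fun k => M x k),
        Finset.sum_ite_eq' univ (1 : H) (fun k => M k 1)] at h5
      simpa using h5
    refine ⟨M 1 1, ?_⟩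
    ext x y
    by_cases h : x = y
    · subst h; simp [one_apply, hconst x]
    · simp [one_apply, h, hdiagonal x y h]

/-- The pairing and resulting Weyl representation for an arbitrary finite abelian group,
transported to `Fin (card H)` and along an isomorphism `G ≃* H × H`. -/
lemma weyl_exists (G : Type) [CommGroup G] [Fintype G]
    (H : Type) [CommGroup H] [Fintype H] (e : G ≃* H × H) :
    ∃ (P : G → Matrix (Fin (Fintype.card H)) (Fin (Fintype.card H)) ℂ)
      (α : G → G → ℂ),
        (∀ g, (P g)ᴴ * P g = 1) ∧
        P 1 = 1 ∧
        (∀ g g', P g * P g' = α g g' • P (g * g')) ∧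
        (∀ g, (∃ c : ℂ, P g = c • (1 : Matrix (Fin (Fintype.card H)) (Fin (Fintype.card H)) ℂ)) → g = 1) ∧
        (∀ M : Matrix (Fin (Fintype.card H)) (Fin (Fintype.card H)) ℂ,
          (∀ g, M * P g = P g * M) →
            ∃ c : ℂ, M = c • (1 : Matrix (Fin (Fintype.card H)) (Fin (Fintype.card H)) ℂ)) := by
  classical
  -- the duality pairing
  have hexp : (Monoid.exponent H) ≠ 0 := Monoid.exponent_ne_zero_of_finite
  have : NeZero ((Monoid.exponent H : ℂ)) := ⟨Nat.cast_ne_zero.mpr hexp⟩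
  obtain ⟨Ψ⟩ := CommGroup.monoidHom_mulEquiv_of_hasEnoughRootsOfUnity H ℂ
  set χ : H → H → ℂˣ := fun a b => Ψ.symm a b with hχ
  have hbm1 : ∀ a b c, χ (a * b) c = χ a c * χ b c := by
    intro a b c
    show (Ψ.symm (a * b)) c = (Ψ.symm a) c * (Ψ.symm b) c
    rw [_root_.map_mul]; rfl
  have hbm2 : ∀ a b c, χ a (b * c) = χ a b * χ a c := by
    intro a b c
    show (Ψ.symm a) (b * c) = (Ψ.symm a) b * (Ψ.symm a) c
    rw [_root_.map_mul]
  have hnd1 : ∀ a, (∀ b, χ a b = 1) → a = 1 := by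
    intro a ha
    have h1 : Ψ.symm a = 1 := MonoidHom.ext fun b => ha b
    rwa [MulEquiv.map_eq_one_iff] at h1
  have hnd2 : ∀ b, (∀ a, χ a b = 1) → b = 1 := by
    intro b hb
    by_contra hb1
    obtain ⟨φ, hφ⟩ := CommGroup.exists_apply_ne_one_of_hasEnoughRootsOfUnity H ℂ hb1
    apply hφ
    have h8 : (Ψ.symm (Ψ φ)) b = 1 := hb (Ψ φ)
    rwa [MulEquiv.symm_apply_apply] at h8
  obtain ⟨P₀, α₀, hu₀, h1₀, hm₀, hk₀, hi₀⟩ := weyl0 H χ hbm1 hbm2 hnd1 hnd2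
  -- transport along reindexing and `e`
  set ι : H ≃ Fin (Fintype.card H) := Fintype.equivFin H with hι
  set Φ : Matrix H H ℂ ≃ₐ[ℂ] Matrix (Fin (Fintype.card H)) (Fin (Fintype.card H)) ℂ :=
    Matrix.reindexAlgEquiv ℂ ℂ ι with hΦ
  have hΦct : ∀ M : Matrix H H ℂ, Φ Mᴴ = (Φ M)ᴴ := by
    intro M
    rw [hΦ]
    simp [Matrix.conjTranspose_reindex]
  refine ⟨fun g => Φ (P₀ (e g)), fun g g' => α₀ (e g) (e g'), ?_, ?_, ?_, ?_, ?_⟩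
  · intro g
    show (Φ (P₀ (e g)))ᴴ * Φ (P₀ (e g)) = 1
    rw [← hΦct, ← _root_.map_mul, hu₀, _root_.map_one]
  · show Φ (P₀ (e 1)) = 1
    rw [_root_.map_one e, h1₀, _root_.map_one]
  · intro g g'
    show Φ (P₀ (e g)) * Φ (P₀ (e g')) = α₀ (e g) (e g') • Φ (P₀ (e (g * g')))
    rw [← _root_.map_mul Φ, hm₀, _root_.map_mul e, _root_.map_smul]
  · intro g ⟨c, hc⟩
    replace hc : Φ (P₀ (e g)) = c • 1 := hc
    have h2 : P₀ (e g) = c • (1 : Matrix H H ℂ) := by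
      apply Φ.injective
      rw [hc, _root_.map_smul, _root_.map_one]
    have h3 := hk₀ (e g) ⟨c, h2⟩
    rwa [MulEquiv.map_eq_one_iff] at h3
  · intro M hM
    obtain ⟨c, hc⟩ := hi₀ (Φ.symm M) (fun h => by
      apply Φ.injective
      rw [_root_.map_mul, _root_.map_mul, AlgEquiv.apply_symm_apply]
      have h4 : M * Φ (P₀ (e (e.symm h))) = Φ (P₀ (e (e.symm h))) * M := hM (e.symm h)
      rwa [MulEquiv.apply_symm_apply] at h4)
    refine ⟨c, ?_⟩
    have h9 := congrArg Φ hc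
    rwa [AlgEquiv.apply_symm_apply, _root_.map_smul, _root_.map_one] at h9

lemma isCyclic_zpowers {G : Type} [Group G] (g : G) : IsCyclic (Subgroup.zpowers g) := by
  refine ⟨⟨⟨g, Subgroup.mem_zpowers g⟩, fun x => ?_⟩⟩
  obtain ⟨k, hk⟩ := Subgroup.mem_zpowers_iff.mp x.2
  exact Subgroup.mem_zpowers_iff.mpr ⟨k, Subtype.ext (by rw [SubgroupClass.coe_zpow]; exact hk)⟩

/-- A finite abelian group with a nondegenerate alternating bimultiplicative pairing into `ℂˣ`
is of the form `H × H`. -/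
lemma symplectic_aux (N : ℕ) : ∀ (G : Type) [CommGroup G] [Fintype G]
    (β : G → G → ℂˣ),
    (∀ g h k, β g (h * k) = β g h * β g k) →
    (∀ g h, β h g = (β g h)⁻¹) →
    (∀ g, β g g = 1) →
    (∀ g, (∀ h, β g h = 1) → g = 1) →
    Nat.card G ≤ N →
    ∃ (H : Type) (_ : CommGroup H) (_ : Fintype H), Nonempty (G ≃* H × H) := by
  induction N using Nat.strong_induction_on with
  | _ N IH =>
  intro G _ _ β hmul hskew hdiag hnd hcard
  -- multiplicativity in the first argument
  have hmul' : ∀ g h k, β (g * h) k = β g k * β h k := by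
    intro g h k
    rw [hskew, hmul, mul_inv, ← hskew, ← hskew]
  -- homs in each slot
  let χr : G → G →* ℂˣ := fun g => MonoidHom.mk' (β g) (fun h k => hmul g h k)
  let χl : G → G →* ℂˣ := fun k => MonoidHom.mk' (fun g => β g k) (fun g h => hmul' g h k)
  have hχr : ∀ g h, χr g h = β g h := fun _ _ => rfl
  have hχl : ∀ g h, χl h g = β g h := fun _ _ => rfl
  have hβpowr : ∀ g h (k : ℕ), β g (h ^ k) = (β g h) ^ k := fun g h k => map_pow (χr g) h k
  have hβpowl : ∀ g h (k : ℕ), β (g ^ k) h = (β g h) ^ k := fun g h k => map_pow (χl h) g k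
  have hβzpowr : ∀ g h (k : ℤ), β g (h ^ k) = (β g h) ^ k := fun g h k => map_zpow (χr g) h k
  have hβzpowl : ∀ g h (k : ℤ), β (g ^ k) h = (β g h) ^ k := fun g h k => map_zpow (χl h) g k
  have hβone : ∀ h, β 1 h = 1 := fun h => map_one (χl h)
  by_cases htriv : ∀ g : G, g = (1 : G)
  · refine ⟨PUnit, inferInstance, inferInstance, ⟨{
      toFun := fun _ => 1
      invFun := fun _ => 1
      left_inv := fun x => (htriv x).symm
      right_inv := fun x => Subsingleton.elim _ _
      map_mul' := fun _ _ => rfl }⟩⟩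
  push_neg at htriv
  obtain ⟨w, hw⟩ := htriv
  -- the exponent
  set n := Monoid.exponent G with hn
  obtain ⟨g₀, hg₀⟩ := Monoid.exists_orderOf_eq_exponent (Monoid.ExponentExists.of_finite (G := G))
  have hnne : n ≠ 0 := Monoid.exponent_ne_zero_of_finite
  have hgpow : ∀ x : G, x ^ n = 1 := fun x => Monoid.pow_exponent_eq_one x
  have hn2 : 2 ≤ n := by
    rcases Nat.lt_or_ge n 2 with h | h
    · exfalso
      have h1 : n = 0 ∨ n = 1 := by omega
      rcases h1 with h1 | h1
      · exact hnne h1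
      · exact hw (by have h2 := hgpow w; rwa [h1, pow_one] at h2)
    · exact h
  -- the image of `β g₀ ·` is cyclic; find a generator, of full order n
  have hrange_fin : Finite (χr g₀).range := Set.Finite.to_subtype (Set.finite_range _)
  have hrange_cyc : IsCyclic (χr g₀).range := subgroup_units_cyclic _
  obtain ⟨ζR, hζR⟩ := hrange_cyc.exists_generator
  obtain ⟨h₀, hh₀⟩ : ∃ h₀ : G, β g₀ h₀ = (ζR : ℂˣ) := by
    obtain ⟨h₀, hh₀⟩ := ζR.2
    exact ⟨h₀, hh₀⟩
  set ζ : ℂˣ := (ζR : ℂˣ) with hζ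
  set m := orderOf ζ with hm
  have hζpowm : ∀ h, (β g₀ h) ^ m = 1 := by
    intro h
    have hmem : β g₀ h ∈ (χr g₀).range := ⟨h, rfl⟩
    obtain ⟨k, hk⟩ := Subgroup.mem_zpowers_iff.mp (hζR ⟨β g₀ h, hmem⟩)
    have hcoe : ζ ^ k = β g₀ h := congrArg Subtype.val hk
    rw [← hcoe, ← zpow_natCast (ζ ^ k) m, ← _root_.zpow_mul, mul_comm, _root_.zpow_mul,
      zpow_natCast, pow_orderOf_eq_one, _root_.one_zpow]
  have hgm : g₀ ^ m = 1 := by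
    apply hnd
    intro h
    rw [hβpowl, hζpowm]
  have hζn : ζ ^ n = 1 := by
    rw [← hh₀, ← hβpowr, hgpow, ← hχr, _root_.map_one]
  have hmdvdn : m ∣ n := orderOf_dvd_of_pow_eq_one hζn
  have hndvdm : n ∣ m := by
    rw [hn, ← hg₀]
    exact orderOf_dvd_of_pow_eq_one hgm
  have hordζ : orderOf ζ = n := by rw [← hm, Nat.dvd_antisymm hmdvdn hndvdm]
  have hordg₀ : orderOf g₀ = n := hg₀.trans hn.symm
  have hordh₀ : orderOf h₀ = n := by
    have h1 : ζ ^ orderOf h₀ = 1 := by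
      rw [← hh₀, ← hβpowr, pow_orderOf_eq_one, ← hχr, _root_.map_one]
    have h2 : n ∣ orderOf h₀ := hordζ ▸ orderOf_dvd_of_pow_eq_one h1
    have h3 : orderOf h₀ ∣ n := by rw [hn]; exact Monoid.order_dvd_exponent h₀
    exact Nat.dvd_antisymm h3 h2
  have : NeZero n := ⟨hnne⟩
  have hζprim : IsPrimitiveRoot ((ζ : ℂˣ) : ℂ) n := by
    have h1 := IsPrimitiveRoot.orderOf ζ
    rw [hordζ] at h1
    exact IsPrimitiveRoot.coe_units_iff.mpr h1
  -- basic pairing values on g₀, h₀ powers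
  have hβgg : ∀ i : ℤ, β (g₀ ^ i) g₀ = 1 := fun i => by rw [hβzpowl, hdiag, _root_.one_zpow]
  have hβhh : ∀ j : ℤ, β (h₀ ^ j) h₀ = 1 := fun j => by rw [hβzpowl, hdiag, _root_.one_zpow]
  have hβhg : ∀ j : ℤ, β (h₀ ^ j) g₀ = ζ ^ (-j) := by
    intro j
    rw [hβzpowl, hskew, hh₀, _root_.inv_zpow, ← _root_.zpow_neg]
  have hβgh : ∀ i : ℤ, β (g₀ ^ i) h₀ = ζ ^ i := fun i => by rw [hβzpowl, hh₀]
  -- the subgroup K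
  set K : Subgroup G := {
    carrier := {x | β x g₀ = 1 ∧ β x h₀ = 1}
    one_mem' := ⟨hβone g₀, hβone h₀⟩
    mul_mem' := by
      rintro a b ⟨ha1, ha2⟩ ⟨hb1, hb2⟩
      exact ⟨by rw [hmul', ha1, hb1, mul_one], by rw [hmul', ha2, hb2, mul_one]⟩
    inv_mem' := by
      rintro a ⟨ha1, ha2⟩
      exact ⟨by rw [← hχl, map_inv, hχl, ha1, inv_one],
             by rw [← hχl, map_inv, hχl, ha2, inv_one]⟩ } with hK
  -- the decomposition map
  set f : ((Subgroup.zpowers g₀ × Subgroup.zpowers h₀) × K) →* G :=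
    MonoidHom.coprod ((Subgroup.zpowers g₀).subtype.coprod (Subgroup.zpowers h₀).subtype)
      K.subtype with hf
  have hfapp : ∀ p, f p = ((p.1.1 : G) * (p.1.2 : G)) * (p.2 : G) := fun p => rfl
  -- injectivity
  have hinj : Function.Injective f := by
    rw [injective_iff_map_eq_one]
    rintro ⟨⟨y, z⟩, k⟩ hp
    rw [hfapp] at hp
    obtain ⟨i, hi⟩ := Subgroup.mem_zpowers_iff.mp y.2
    obtain ⟨j, hj⟩ := Subgroup.mem_zpowers_iff.mp z.2
    have hβg : β ((y : G) * (z : G) * (k : G)) g₀ = ζ ^ (-j) := by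
      rw [hmul', hmul', ← hi, ← hj, hβgg, hβhg, k.2.1, one_mul, mul_one]
    have hβh : β ((y : G) * (z : G) * (k : G)) h₀ = ζ ^ i := by
      rw [hmul', hmul', ← hi, ← hj, hβgh, hβhh, k.2.2, mul_one, mul_one]
    rw [hp, hβone] at hβg hβh
    have hj0 : h₀ ^ j = (1 : G) := by
      rw [← orderOf_dvd_iff_zpow_eq_one, hordh₀, ← hordζ, orderOf_dvd_iff_zpow_eq_one]
      rw [← neg_neg j, _root_.zpow_neg, ← hβg, inv_one]
    have hi0 : g₀ ^ i = (1 : G) := by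
      rw [← orderOf_dvd_iff_zpow_eq_one, hordg₀, ← hordζ, orderOf_dvd_iff_zpow_eq_one, ← hβh]
    have hy : y = 1 := Subtype.ext (by rw [← hi, hi0]; rfl)
    have hz : z = 1 := Subtype.ext (by rw [← hj, hj0]; rfl)
    have hk1 : (k : G) = 1 := by
      rw [hy, hz] at hp
      simpa using hp
    exact Prod.ext (Prod.ext hy hz) (Subtype.ext hk1)
  -- surjectivity
  have hpairs : ∀ x : G, ∃ i j : ℤ, β x g₀ = ζ ^ j ∧ β x h₀ = ζ ^ i := by
    intro x
    have h1 : ((β x g₀ : ℂˣ) : ℂ) ^ n = 1 := by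
      have : (β x g₀) ^ n = 1 := by rw [← hβpowr, hgpow, ← hχr, _root_.map_one]
      rw [← Units.val_pow_eq_pow_val, this, Units.val_one]
    have h2 : ((β x h₀ : ℂˣ) : ℂ) ^ n = 1 := by
      have : (β x h₀) ^ n = 1 := by rw [← hβpowr, hgpow, ← hχr, _root_.map_one]
      rw [← Units.val_pow_eq_pow_val, this, Units.val_one]
    obtain ⟨j, _, hj⟩ := hζprim.eq_pow_of_pow_eq_one h1
    obtain ⟨i, _, hi⟩ := hζprim.eq_pow_of_pow_eq_one h2
    refine ⟨(i : ℤ), (j : ℤ), ?_, ?_⟩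
    · rw [zpow_natCast]; exact Units.ext (by rw [Units.val_pow_eq_pow_val]; exact hj.symm)
    · rw [zpow_natCast]; exact Units.ext (by rw [Units.val_pow_eq_pow_val]; exact hi.symm)
  have hsurj : Function.Surjective f := by
    intro x
    obtain ⟨i, j, hxg, hxh⟩ := hpairs x
    set a : G := g₀ ^ i * h₀ ^ (-j) with ha
    have hag : β a g₀ = ζ ^ j := by
      rw [ha, hmul', hβgg, hβhg, one_mul, neg_neg]
    have hah : β a h₀ = ζ ^ i := by
      rw [ha, hmul', hβgh, hβhh, mul_one]
    have hkK : a⁻¹ * x ∈ K := by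
      constructor
      · rw [hmul', ← hχl, map_inv, hχl, hag, hxg, inv_mul_cancel]
      · rw [hmul', ← hχl, map_inv, hχl, hah, hxh, inv_mul_cancel]
    refine ⟨⟨⟨⟨g₀ ^ i, Subgroup.mem_zpowers_iff.mpr ⟨i, rfl⟩⟩,
      ⟨h₀ ^ (-j), Subgroup.mem_zpowers_iff.mpr ⟨-j, rfl⟩⟩⟩, ⟨a⁻¹ * x, hkK⟩⟩, ?_⟩
    rw [hfapp]
    show g₀ ^ i * h₀ ^ (-j) * (a⁻¹ * x) = x
    rw [← ha, mul_inv_cancel_left]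
  let E : ((Subgroup.zpowers g₀ × Subgroup.zpowers h₀) × K) ≃* G :=
    MulEquiv.ofBijective f ⟨hinj, hsurj⟩
  -- cardinality bookkeeping
  have hcardG : Nat.card G = n * n * Nat.card K := by
    rw [← Nat.card_congr E.toEquiv, Nat.card_prod, Nat.card_prod,
      Nat.card_zpowers, Nat.card_zpowers, hordg₀, hordh₀]
  have hKpos : 0 < Nat.card K := Nat.card_pos
  have hKlt : Nat.card K < Nat.card G := by
    rw [hcardG]
    have h4 : 2 * 2 ≤ n * n := Nat.mul_le_mul hn2 hn2
    calc Nat.card ↥K < 2 * 2 * Nat.card ↥K := by omega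
      _ ≤ n * n * Nat.card ↥K := Nat.mul_le_mul_right _ h4
  -- restricted pairing on K
  letI : Fintype ↥K := Fintype.ofFinite _
  have hres := IH (Nat.card K) (lt_of_lt_of_le hKlt hcard) K
    (fun x y => β x y)
    (fun g h k => by
      show β (g : G) (((h * k : ↥K) : G)) = β (g : G) (h : G) * β (g : G) (k : G)
      rw [Subgroup.coe_mul]; exact hmul _ _ _)
    (fun g h => hskew (g : G) (h : G))
    (fun g => hdiag (g : G))
    (fun x hx => by
      refine Subtype.ext ?_
      show (x : G) = 1
      apply hnd
      intro h
      obtain ⟨⟨⟨y, z⟩, k⟩, rfl⟩ := hsurj h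
      rw [hfapp]
      show β (x : G) ((y : G) * (z : G) * (k : G)) = 1
      obtain ⟨i, hi⟩ := Subgroup.mem_zpowers_iff.mp y.2
      obtain ⟨j, hj⟩ := Subgroup.mem_zpowers_iff.mp z.2
      rw [hmul, hmul, ← hi, ← hj, hβzpowr, hβzpowr, x.2.1, x.2.2, _root_.one_zpow,
        _root_.one_zpow, one_mul, one_mul]
      exact hx k)
    le_rfl
  obtain ⟨H', _, _, ⟨e'⟩⟩ := hres
  -- assemble the final isomorphism
  letI : Fintype (Subgroup.zpowers g₀) := Fintype.ofFinite _
  letI : IsCyclic (Subgroup.zpowers g₀) := isCyclic_zpowers g₀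
  letI : IsCyclic (Subgroup.zpowers h₀) := isCyclic_zpowers h₀
  have hcyccard : Nat.card (Subgroup.zpowers h₀) = Nat.card (Subgroup.zpowers g₀) := by
    rw [Nat.card_zpowers, Nat.card_zpowers, hordg₀, hordh₀]
  let cyciso : (Subgroup.zpowers h₀) ≃* (Subgroup.zpowers g₀) := mulEquivOfCyclicCardEq hcyccard
  refine ⟨(Subgroup.zpowers g₀) × H', inferInstance, inferInstance, ⟨?_⟩⟩
  exact E.symm.trans ((MulEquiv.prodCongr (MulEquiv.prodCongr (MulEquiv.refl _) cyciso) e').trans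
    (MulEquiv.prodProdProdComm _ _ _ _))

/-- **Existence of faithful irreducible projective unitary representations.**
A finite abelian group `G` admits a faithful irreducible projective unitary representation on
some `ℂ^d` (`d ≥ 1`) iff `G ≅ H × H` for some finite abelian group `H`; moreover, in that case
one may take `d = |H|` (so `|G| = d²`). -/
theorem faithful_irreducible_projRep_iff_sq (G : Type) [CommGroup G] [Fintype G] :
    ((∃ d : ℕ, 1 ≤ d ∧
        ∃ (P : G → Matrix (Fin d) (Fin d) ℂ) (α : G → G → ℂ),
          (∀ g, (P g)ᴴ * P g = 1) ∧
          P 1 = 1 ∧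
          (∀ g g', P g * P g' = α g g' • P (g * g')) ∧
          (∀ g, (∃ c : ℂ, P g = c • (1 : Matrix (Fin d) (Fin d) ℂ)) → g = 1) ∧
          (∀ M : Matrix (Fin d) (Fin d) ℂ,
            (∀ g, M * P g = P g * M) → ∃ c : ℂ, M = c • (1 : Matrix (Fin d) (Fin d) ℂ))) ↔
      (∃ (H : Type) (_ : CommGroup H) (_ : Fintype H), Nonempty (G ≃* H × H))) ∧
    (∀ (H : Type) [CommGroup H] [Fintype H], (G ≃* H × H) →
      ∃ (P : G → Matrix (Fin (Fintype.card H)) (Fin (Fintype.card H)) ℂ)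
        (α : G → G → ℂ),
          (∀ g, (P g)ᴴ * P g = 1) ∧
          P 1 = 1 ∧
          (∀ g g', P g * P g' = α g g' • P (g * g')) ∧
          (∀ g, (∃ c : ℂ, P g = c • (1 : Matrix (Fin (Fintype.card H)) (Fin (Fintype.card H)) ℂ)) → g = 1) ∧
          (∀ M : Matrix (Fin (Fintype.card H)) (Fin (Fintype.card H)) ℂ,
            (∀ g, M * P g = P g * M) →
              ∃ c : ℂ, M = c • (1 : Matrix (Fin (Fintype.card H)) (Fin (Fintype.card H)) ℂ))) := by
  constructor
  · constructor
    · rintro ⟨d, hd, P, α, hu, h1, hm, hker, hirr⟩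
      haveI : NeZero d := ⟨Nat.one_le_iff_ne_zero.mp hd⟩
      -- invertibility facts
      have hPu : ∀ g, IsUnit (P g) := fun g =>
        ⟨⟨P g, (P g)ᴴ, (mul_eq_one_comm).mp (hu g), hu g⟩, rfl⟩
      have hUnitNe : ∀ M : Matrix (Fin d) (Fin d) ℂ, IsUnit M → M ≠ 0 := by
        intro M hM h0
        obtain ⟨u, hu'⟩ := hM
        have h3 : ((u⁻¹ : (Matrix (Fin d) (Fin d) ℂ)ˣ) : Matrix (Fin d) (Fin d) ℂ) * M = 1 := by
          rw [← hu']; exact u.inv_mul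
        rw [h0, mul_zero] at h3
        have h4 := congrFun (congrFun h3 ⟨0, Nat.pos_of_ne_zero (NeZero.ne d)⟩)
          ⟨0, Nat.pos_of_ne_zero (NeZero.ne d)⟩
        simp [Matrix.one_apply] at h4
      have hprodne : ∀ g h, P g * P h ≠ 0 := fun g h =>
        hUnitNe _ ((hPu g).mul (hPu h))
      have hαne : ∀ g h, α g h ≠ 0 := by
        intro g h hα
        exact hprodne g h (by rw [hm, hα, zero_smul])
      have hPne : ∀ g, P g ≠ 0 := fun g => hUnitNe _ (hPu g)
      -- scalar cancellation
      have hcancel : ∀ (c c' : ℂ) (M : Matrix (Fin d) (Fin d) ℂ),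
          M ≠ 0 → c • M = c' • M → c = c' := by
        intro c c' M hM h
        by_contra hne
        apply hM
        have h2 : (c - c') • M = 0 := by rw [sub_smul, h, sub_self]
        rcases smul_eq_zero.mp h2 with h' | h'
        · exact absurd (sub_eq_zero.mp h') hne
        · exact absurd h' hM
      -- the commutator pairing
      set β : G → G → ℂˣ :=
        fun g h => Units.mk0 (α g h / α h g) (div_ne_zero (hαne g h) (hαne h g)) with hβ
      have hβdef : ∀ g h, (β g h : ℂ) = α g h / α h g := fun _ _ => rfl
      have hcomm : ∀ g h, P g * P h = (β g h : ℂ) • (P h * P g) := by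
        intro g h
        rw [hm g h, hm h g, mul_comm h g, smul_smul, hβdef,
          div_mul_cancel₀ _ (hαne h g)]
      have hβmul : ∀ g h k, β g (h * k) = β g h * β g k := by
        intro g h k
        refine Units.ext ?_
        have e1 : P g * (P h * P k) = (α h k * (β g (h * k) : ℂ)) • (P (h * k) * P g) := by
          rw [hm h k, Matrix.mul_smul, hcomm g (h * k), smul_smul]
        have e2 : P g * (P h * P k) = ((β g h : ℂ) * (β g k : ℂ) * α h k) • (P (h * k) * P g) := by
          calc P g * (P h * P k) = (P g * P h) * P k := by rw [Matrix.mul_assoc]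
            _ = ((β g h : ℂ) • (P h * P g)) * P k := by rw [hcomm g h]
            _ = (β g h : ℂ) • (P h * (P g * P k)) := by
                rw [Matrix.smul_mul, Matrix.mul_assoc]
            _ = (β g h : ℂ) • (P h * ((β g k : ℂ) • (P k * P g))) := by rw [hcomm g k]
            _ = ((β g h : ℂ) * (β g k : ℂ)) • ((P h * P k) * P g) := by
                rw [Matrix.mul_smul, smul_smul, Matrix.mul_assoc]
            _ = ((β g h : ℂ) * (β g k : ℂ)) • ((α h k • P (h * k)) * P g) := by rw [hm h k]
            _ = ((β g h : ℂ) * (β g k : ℂ) * α h k) • (P (h * k) * P g) := by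
                rw [Matrix.smul_mul, smul_smul]
        have e3 : α h k * (β g (h * k) : ℂ) = (β g h : ℂ) * (β g k : ℂ) * α h k :=
          hcancel _ _ _ (hprodne (h * k) g) (e1 ▸ e2 ▸ rfl)
        have e4 := mul_left_cancel₀ (hαne h k) (by rw [e3]; ring : α h k * (β g (h * k) : ℂ) = α h k * ((β g h : ℂ) * (β g k : ℂ)))
        rw [e4]; rfl
      have hβskew : ∀ g h, β h g = (β g h)⁻¹ := by
        intro g h
        refine Units.ext ?_
        rw [Units.val_inv_eq_inv_val, hβdef, hβdef, inv_div]
      have hβdiag : ∀ g, β g g = 1 := fun g => Units.ext (by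
        rw [hβdef, div_self (hαne g g), Units.val_one])
      have hβnd : ∀ g, (∀ h, β g h = 1) → g = 1 := by
        intro g hg
        obtain ⟨c, hc⟩ := hirr (P g) (fun h => by
          rw [hcomm g h, hg h, Units.val_one, one_smul])
        exact hker g ⟨c, hc⟩
      exact symplectic_aux (Nat.card G) G β hβmul hβskew hβdiag hβnd le_rfl
    · rintro ⟨H, _, _, ⟨e⟩⟩
      obtain ⟨P, α, h⟩ := weyl_exists G H e
      exact ⟨Fintype.card H, Fintype.card_pos_iff.mpr ⟨1⟩, P, α, h⟩
  · intro H _ _ e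
    exact weyl_exists G H e
end

section
/- Let G be a finite abelian group with |G| = d² and d > 1, and let Π : G → M_d(ℂ) be a projective unitary representation that is faithful (Π(g) is a scalar multiple of the identity only when g = e) and irreducible (the only matrices commuting with every Π(g) are scalar multiples of the identity). Then Tr(Π(g)) = 0 for every g ≠ e. -/
open Finset Matrix ComplexConjugate
open scoped ComplexOrder

/-- Every faithful irreducible projective unitary representation `P : G → M_d(ℂ)` of a finite
abelian group `G` with `|G| = d²` and `d > 1` has `Tr(P(g)) = 0` for all `g ≠ e`. -/
theorem trace_eq_zero_of_ne_one {G : Type*} [CommGroup G] [Fintype G] {d : ℕ}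
    (hd : 1 < d) (hcard : Fintype.card G = d ^ 2)
    (P : G → Matrix (Fin d) (Fin d) ℂ) (α : G → G → ℂ)
    (hunit : ∀ g, (P g)ᴴ * P g = 1)
    (hone : P 1 = 1)
    (hcoc : ∀ g g', P g * P g' = α g g' • P (g * g'))
    (hfaith : ∀ g, (∃ c : ℂ, P g = c • (1 : Matrix (Fin d) (Fin d) ℂ)) → g = 1)
    (hirr : ∀ M : Matrix (Fin d) (Fin d) ℂ,
      (∀ g, M * P g = P g * M) → ∃ c : ℂ, M = c • (1 : Matrix (Fin d) (Fin d) ℂ)) :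
    ∀ g : G, g ≠ 1 → (P g).trace = 0 := by
  intro g hg
  by_cases hcomm : ∀ h, P h * P g = P g * P h
  · exact absurd (hfaith g (hirr (P g) fun h => (hcomm h).symm)) hg
  push_neg at hcomm
  obtain ⟨h, hh⟩ := hcomm
  have h1 : P h * P g = α h g • P (g * h) := by rw [hcoc, mul_comm h g]
  have h2 : P g * P h = α g h • P (g * h) := hcoc g h
  have hne : α h g ≠ α g h := by
    intro he; apply hh; rw [h1, h2, he]
  have hα : α g h ≠ 0 := by
    intro h0
    have hz : P g * P h = 0 := by rw [h2, h0, zero_smul]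
    have hPh : P h = 0 := by
      have := congrArg (fun M => (P g)ᴴ * M) hz
      simpa [← mul_assoc, hunit g] using this
    have h01 := hunit h
    rw [hPh] at h01
    simp only [Matrix.mul_zero, Matrix.conjTranspose_zero] at h01
    have i : Fin d := ⟨0, by omega⟩
    have := congrFun (congrFun h01 i) i
    simp [Matrix.one_apply_eq] at this
  have hPhu : P h * (P h)ᴴ = 1 := mul_eq_one_comm.mp (hunit h)
  have key : P h * P g * (P h)ᴴ = (α h g / α g h) • P g := by
    have hr : P h * P g = (α h g / α g h) • (P g * P h) := by
      rw [h1, h2, smul_smul, div_mul_cancel₀ _ hα]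
    rw [hr, smul_mul_assoc, mul_assoc, hPhu, mul_one]
  have ht : (P g).trace = (α h g / α g h) * (P g).trace := by
    calc (P g).trace = (P h * P g * (P h)ᴴ).trace := by
          rw [Matrix.trace_mul_cycle, hunit h, one_mul]
      _ = (α h g / α g h) * (P g).trace := by rw [key, Matrix.trace_smul, smul_eq_mul]
  have hr1 : α h g / α g h ≠ 1 := fun he => hne ((div_eq_one_iff_eq hα).mp he)
  have hz : (1 - α h g / α g h) * (P g).trace = 0 := by
    rw [sub_mul, one_mul, ← ht, sub_self]
  rcases mul_eq_zero.mp hz with h0 | h0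
  · exact absurd (sub_eq_zero.mp h0).symm hr1
  · exact h0
end

section
/- Let d be an odd positive integer, ω = exp(−2πi/d), X, Z the shift and clock matrices on ℂ^d, and 2⁻¹ = (d+1)/2 the inverse of 2 mod d. Let ρ ∈ M_d(ℂ) be Hermitian with characteristic function φ_ρ(j,l) = Tr(ρ · ω^{2⁻¹ jl} X^j Z^l) for (j,l) ∈ ℤ_d × ℤ_d. Then ρ is positive semidefinite if and only if the d²×d² matrix M^Q, indexed by ℤ_d × ℤ_d and with entries M^Q_{(j,l),(j',l')} = φ_ρ(j'−j, l'−l) · ω^{2⁻¹ (j l' − j' l)}, is positive semidefinite. -/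
open Finset Matrix ComplexConjugate
open scoped ComplexOrder

noncomputable def omega (d : ℕ) : ℂ := Complex.exp (-(2 * Real.pi * Complex.I) / d)

def shift (d : ℕ) : Matrix (ZMod d) (ZMod d) ℂ :=
  Matrix.of fun m k => if m = k + 1 then 1 else 0

noncomputable def clock (d : ℕ) : Matrix (ZMod d) (ZMod d) ℂ :=
  Matrix.diagonal fun k => omega d ^ k.val

set_option linter.unusedSectionVars false
namespace QB

variable (d : ℕ) [NeZero d]

lemma isPrimitiveRoot : IsPrimitiveRoot (omega d) d := by
  have h : omega d = (Complex.exp (2 * Real.pi * Complex.I / d))⁻¹ := by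
    rw [omega, ← Complex.exp_neg]
    ring_nf
  rw [h]
  exact (Complex.isPrimitiveRoot_exp d (NeZero.ne d)).inv

lemma omega_pow_d : omega d ^ d = 1 := (isPrimitiveRoot d).pow_eq_one

lemma omega_pow_mod (n : ℕ) : omega d ^ n = omega d ^ (n % d) :=
  pow_eq_pow_mod n (omega_pow_d d)

noncomputable def ee (a : ZMod d) : ℂ := omega d ^ a.val

lemma ee_add (a b : ZMod d) : ee d (a + b) = ee d a * ee d b := by
  rw [ee, ee, ee, ZMod.val_add, ← omega_pow_mod, pow_add]

lemma ee_mul_val (a b : ZMod d) : omega d ^ (a.val * b.val) = ee d (a * b) := by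
  rw [ee, ZMod.val_mul, ← omega_pow_mod]

lemma ee_zero : ee d 0 = 1 := by simp [ee]

lemma conj_omega : conj (omega d) = (omega d)⁻¹ := by
  rw [omega, ← Complex.exp_conj, ← Complex.exp_neg]
  congr 1
  rw [show (-(2 * Real.pi * Complex.I) / d : ℂ) = ((-2 * Real.pi / d : ℝ)) * Complex.I by
      push_cast; ring]
  rw [_root_.map_mul, Complex.conj_ofReal, Complex.conj_I]
  ring

lemma ee_conj (a : ZMod d) : conj (ee d a) = ee d (-a) := by
  have h1 : ee d a * ee d (-a) = 1 := by
    rw [← ee_add]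
    simp [ee_zero]
  have h2 : conj (ee d a) = (ee d a)⁻¹ := by
    rw [ee, map_pow, conj_omega, inv_pow]
  rw [h2, inv_eq_of_mul_eq_one_right h1]


noncomputable def cc : ZMod d := (((d + 1) / 2 : ℕ) : ZMod d)

lemma two_cc (hd : Odd d) : (2 : ZMod d) * cc d = 1 := by
  obtain ⟨k, hk⟩ := hd
  have h : 2 * ((d + 1) / 2) = d + 1 := by omega
  have h2 : ((2 * ((d + 1) / 2) : ℕ) : ZMod d) = ((d + 1 : ℕ) : ZMod d) := by rw [h]
  push_cast at h2
  rw [cc]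
  rw [h2, ZMod.natCast_self, zero_add]

lemma shift_pow (n : ℕ) :
    shift d ^ n = Matrix.of fun m k => if m = k + (n : ZMod d) then 1 else 0 := by
  induction n with
  | zero => ext m k; simp [Matrix.one_apply]
  | succ n ih =>
    ext m k
    rw [pow_succ, ih]
    simp only [Matrix.mul_apply, Matrix.of_apply, shift, ite_mul, one_mul, zero_mul,
      mul_ite, mul_one, mul_zero]
    rw [Finset.sum_ite_eq' Finset.univ (k + 1) (fun j => if m = j + (n : ZMod d) then (1:ℂ) else 0)]
    simp only [Finset.mem_univ, if_true]
    push_cast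
    ring_nf

lemma clock_pow (n : ℕ) :
    clock d ^ n = Matrix.diagonal fun k => omega d ^ (n * k.val) := by
  rw [clock, Matrix.diagonal_pow]
  ext a b
  by_cases h : a = b <;>
    simp [Matrix.diagonal_apply, h, ← pow_mul, mul_comm]

noncomputable def Dm (p : ZMod d × ZMod d) : Matrix (ZMod d) (ZMod d) ℂ :=
  ee d (cc d * p.1 * p.2) • (shift d ^ (p.1).val * clock d ^ (p.2).val)

lemma Dm_apply (p : ZMod d × ZMod d) (m k : ZMod d) :
    Dm d p m k = if m = k + p.1 then ee d (cc d * p.1 * p.2 + p.2 * k) else 0 := by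
  rw [Dm, shift_pow, clock_pow]
  rw [Matrix.smul_apply, Matrix.mul_diagonal, Matrix.of_apply]
  rw [ZMod.natCast_val, ZMod.cast_id]
  by_cases h : m = k + p.1
  · rw [if_pos h, if_pos h]
    rw [smul_eq_mul, one_mul, ee_mul_val, ← ee_add]
  · rw [if_neg h, if_neg h, zero_mul, smul_zero]


lemma Dm_mul (hd : Odd d) (p q : ZMod d × ZMod d) :
    Dm d p * Dm d q = ee d (cc d * (q.1 * p.2 - p.1 * q.2)) • Dm d (p + q) := by
  have hc := two_cc d hd
  ext m k
  rw [Matrix.mul_apply, Matrix.smul_apply, Dm_apply, smul_eq_mul]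
  simp only [Dm_apply, ite_mul, zero_mul, mul_ite, mul_zero]
  rw [Finset.sum_ite_eq' Finset.univ (k + q.1)
    (fun n => if m = n + p.1 then ee d (cc d * p.1 * p.2 + p.2 * n) * ee d (cc d * q.1 * q.2 + q.2 * k) else 0)]
  simp only [Finset.mem_univ, if_true, Prod.fst_add, Prod.snd_add]
  have hcond : (m = k + q.1 + p.1) ↔ (m = k + (p.1 + q.1)) := by constructor <;> intro h <;> rw [h] <;> ring
  by_cases h : m = k + (p.1 + q.1)
  · rw [if_pos (hcond.mpr h), if_pos h, ← ee_add, ← ee_add]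
    congr 1
    linear_combination (-(p.2 * q.1)) * hc
  · rw [if_neg (fun hh => h (hcond.mp hh)), if_neg h]

lemma Dm_conjTranspose (hd : Odd d) (p : ZMod d × ZMod d) :
    (Dm d p)ᴴ = Dm d (-p) := by
  have hc := two_cc d hd
  ext m k
  rw [Matrix.conjTranspose_apply, Dm_apply, Dm_apply]
  simp only [Prod.fst_neg, Prod.snd_neg]
  by_cases h : k = m + p.1
  · have h' : m = k + -p.1 := by rw [h]; ring
    rw [if_pos h, if_pos h', Complex.star_def, ee_conj]
    congr 1
    rw [h]
    linear_combination (-(p.1 * p.2)) * hc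
  · have h' : ¬ m = k + -p.1 := fun hh => h (by rw [hh]; ring)
    rw [if_neg h, if_neg h', star_zero]

lemma sum_ee (t : ZMod d) :
    (∑ l : ZMod d, ee d (l * t)) = if t = 0 then (d : ℂ) else 0 := by
  by_cases h : t = 0
  · simp [h, ee_zero, ZMod.card]
  · rw [if_neg h]
    have h1 : ∀ l : ZMod d, ee d (l * t) = (omega d ^ t.val) ^ l.val := by
      intro l
      rw [← ee_mul_val, ← pow_mul, mul_comm l.val t.val, pow_mul]
    simp_rw [h1]
    have hval : ∀ l : ZMod d, l.val ∈ Finset.range d := fun l => Finset.mem_range.mpr (ZMod.val_lt l)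
    rw [Finset.sum_nbij' (i := fun (l : ZMod d) => l.val) (j := fun (i : ℕ) => (i : ZMod d))
      (fun l _ => hval l) (fun i _ => Finset.mem_univ _)
      (fun l _ => by simp [ZMod.natCast_val, ZMod.cast_id])
      (fun i hi => ZMod.val_natCast_of_lt (Finset.mem_range.mp hi))
      (fun l _ => rfl)]
    have hne : omega d ^ t.val ≠ 1 := by
      refine (isPrimitiveRoot d).pow_ne_one_of_pos_of_lt ?_ (ZMod.val_lt t)
      exact fun hv => h ((ZMod.val_eq_zero t).mp hv)
    rw [geom_sum_eq hne]
    have : (omega d ^ t.val) ^ d = 1 := by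
      rw [← pow_mul, mul_comm, pow_mul, omega_pow_d, one_pow]
    rw [this, sub_self, zero_div]

lemma Dm_complete (m k m' k' : ZMod d) :
    (∑ q : ZMod d × ZMod d, conj (Dm d q m' k') * Dm d q m k)
      = if m' = m ∧ k' = k then (d : ℂ) else 0 := by
  have key : ∀ j l : ZMod d, conj (Dm d (j, l) m' k') * Dm d (j, l) m k
      = ((if m' = k' + j then (1:ℂ) else 0) * (if m = k + j then (1:ℂ) else 0)) * ee d (l * (k - k')) := by
    intro j l
    rw [Dm_apply, Dm_apply]
    by_cases h1 : m' = k' + j <;> by_cases h2 : m = k + j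
    · rw [if_pos h1, if_pos h2, if_pos h1, if_pos h2, one_mul, one_mul, ee_conj, ← ee_add]
      congr 1
      ring
    · rw [if_pos h1, if_neg h2, if_pos h1, if_neg h2]
      simp
    · rw [if_neg h1, if_pos h2, if_neg h1, if_pos h2]
      simp
    · rw [if_neg h1, if_neg h2, if_neg h1, if_neg h2]
      simp
  rw [Fintype.sum_prod_type]
  simp_rw [key]
  have inner : ∀ j : ZMod d, (∑ l : ZMod d,
      ((if m' = k' + j then (1:ℂ) else 0) * (if m = k + j then (1:ℂ) else 0)) * ee d (l * (k - k')))
      = ((if m' = k' + j then (1:ℂ) else 0) * (if m = k + j then (1:ℂ) else 0)) *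
        (if k - k' = 0 then (d : ℂ) else 0) := by
    intro j
    rw [← Finset.mul_sum, sum_ee]
  simp_rw [inner]
  by_cases hk : k' = k
  · subst hk
    simp only [sub_self, if_true, ite_true]
    have h2 : ∀ j : ZMod d, ((if m' = k' + j then (1:ℂ) else 0) * (if m = k' + j then (1:ℂ) else 0)) * (d:ℂ)
        = if j = m - k' then (if m' = m then (d:ℂ) else 0) else 0 := by
      intro j
      by_cases hj : j = m - k'
      · subst hj
        have hm : k' + (m - k') = m := by ring
        rw [hm]
        by_cases hm' : m' = m <;> by_cases hmm : m = m <;> simp [hm', hmm]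
      · have : ¬ m = k' + j := fun hh => hj (by rw [hh]; ring)
        simp [this, hj]
    simp_rw [h2]
    rw [Finset.sum_ite_eq' Finset.univ (m - k') (fun _ => if m' = m then (d:ℂ) else 0)]
    simp only [Finset.mem_univ, if_true]
    by_cases hm : m' = m <;> simp [hm]
  · have : ¬ (k - k' = 0) := fun hh => hk (by linear_combination -hh)
    simp [this, hk]


lemma trace_psd_nonneg {n : Type*} [Fintype n] [DecidableEq n] {A : Matrix n n ℂ}
    (hA : A.PosSemidef) : 0 ≤ A.trace := by
  rw [Matrix.trace]
  refine Finset.sum_nonneg fun i _ => ?_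
  have h := hA.dotProduct_mulVec_nonneg (Pi.single i 1)
  simpa [dotProduct, Matrix.mulVec, Pi.single_apply, apply_ite, mul_ite, ite_mul,
    Finset.sum_ite_eq, Finset.sum_ite_eq', Matrix.diag] using h

lemma quad (ρ : Matrix (ZMod d) (ZMod d) ℂ) (x : ZMod d × ZMod d → ℂ) :
    ((∑ q : ZMod d × ZMod d, x q • Dm d q) * ρ * (∑ q : ZMod d × ZMod d, x q • Dm d q)ᴴ).trace
      = ∑ p : ZMod d × ZMod d, ∑ q : ZMod d × ZMod d,
          (star (x p) * x q) * (ρ * ((Dm d p)ᴴ * Dm d q)).trace := by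
  rw [Matrix.trace_mul_comm, ← Matrix.mul_assoc, Matrix.trace_mul_comm]
  rw [Matrix.conjTranspose_sum]
  simp only [Matrix.conjTranspose_smul]
  rw [Finset.sum_mul_sum]
  simp only [Matrix.mul_sum, Matrix.trace_sum, smul_mul_assoc, mul_smul_comm, smul_smul,
    Matrix.mul_smul, Matrix.trace_smul, smul_eq_mul]
  exact Finset.sum_congr rfl fun p _ => Finset.sum_congr rfl fun q _ => by ring

end QB

open QB in
/-- **Quantum Bochner's theorem for the discrete Wigner function, quantum part.**
For odd `d` and Hermitian `ρ` with characteristic function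
`φ_ρ(j,l) = Tr(ρ ω^{2⁻¹ jl} X^j Z^l)`, `ρ` is positive semidefinite iff the `d²×d²` matrix
`M^Q_{(j,l),(j',l')} = φ_ρ(j'−j, l'−l) ω^{2⁻¹ (jl' − j'l)}` is positive semidefinite. -/
theorem posSemidef_iff_MQ_posSemidef (d : ℕ) [NeZero d] (hd : Odd d)
    (ρ : Matrix (ZMod d) (ZMod d) ℂ) (hρ : ρ.IsHermitian)
    (φ : ZMod d × ZMod d → ℂ)
    (hφ : ∀ p : ZMod d × ZMod d,
      φ p = (ρ * (omega d ^ ((((d + 1) / 2 : ℕ) : ZMod d) * p.1 * p.2).val •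
        (shift d ^ (p.1).val * clock d ^ (p.2).val))).trace) :
    ρ.PosSemidef ↔
      (Matrix.of fun p q : ZMod d × ZMod d =>
        φ (q - p) *
          omega d ^ ((((d + 1) / 2 : ℕ) : ZMod d) * (p.1 * q.2 - q.1 * p.2)).val).PosSemidef := by
  have hφ' : ∀ r : ZMod d × ZMod d, φ r = (ρ * Dm d r).trace := fun r => hφ r
  have hMdef : (Matrix.of fun p q : ZMod d × ZMod d =>
        φ (q - p) *
          omega d ^ ((((d + 1) / 2 : ℕ) : ZMod d) * (p.1 * q.2 - q.1 * p.2)).val)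
      = Matrix.of fun p q : ZMod d × ZMod d => (ρ * ((Dm d p)ᴴ * Dm d q)).trace := by
    ext p q
    simp only [Matrix.of_apply]
    rw [Dm_conjTranspose d hd, Dm_mul d hd, neg_add_eq_sub]
    rw [Matrix.mul_smul, Matrix.trace_smul, smul_eq_mul, ← hφ' (q - p)]
    have harg : cc d * (q.1 * (-p).2 - (-p).1 * q.2) = cc d * (p.1 * q.2 - q.1 * p.2) := by
      simp only [Prod.fst_neg, Prod.snd_neg]
      ring
    rw [harg, mul_comm]
    rfl
  rw [hMdef]
  constructor
  · intro h
    refine posSemidef_iff_dotProduct_mulVec.mpr ⟨?_, ?_⟩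
    · show _ = _
      ext p q
      rw [Matrix.conjTranspose_apply, Matrix.of_apply, Matrix.of_apply]
      rw [← Matrix.trace_conjTranspose, Matrix.conjTranspose_mul, Matrix.conjTranspose_mul,
        Matrix.conjTranspose_conjTranspose, hρ.eq, Matrix.trace_mul_comm]
    · intro x
      have hdot : star x ⬝ᵥ ((Matrix.of fun p q : ZMod d × ZMod d =>
            (ρ * ((Dm d p)ᴴ * Dm d q)).trace) *ᵥ x)
          = ∑ p : ZMod d × ZMod d, ∑ q : ZMod d × ZMod d,
              (star (x p) * x q) * (ρ * ((Dm d p)ᴴ * Dm d q)).trace := by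
        simp only [dotProduct, Matrix.mulVec, Pi.star_apply, Matrix.of_apply,
          Finset.mul_sum]
        exact Finset.sum_congr rfl fun p _ => Finset.sum_congr rfl fun q _ => by ring
      rw [hdot, ← quad d ρ x]
      exact trace_psd_nonneg (h.mul_mul_conjTranspose_same _)
  · intro h
    refine posSemidef_iff_dotProduct_mulVec.mpr ⟨hρ, fun v => ?_⟩
    have hd0 : (d : ℂ) ≠ 0 := Nat.cast_ne_zero.mpr (NeZero.ne d)
    set x : ZMod d × ZMod d → ℂ :=
      fun q => (d : ℂ)⁻¹ * ∑ k, conj (Dm d q 0 k) * conj (v k) with hx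
    set Sv : Matrix (ZMod d) (ZMod d) ℂ :=
      Matrix.of (fun m k => (if m = 0 then (1:ℂ) else 0) * conj (v k)) with hSv
    have hT : (∑ q : ZMod d × ZMod d, x q • Dm d q) = Sv := by
      ext m k
      rw [Matrix.sum_apply]
      simp only [Matrix.smul_apply, smul_eq_mul, hx]
      calc ∑ q : ZMod d × ZMod d, ((d:ℂ)⁻¹ * ∑ k', conj (Dm d q 0 k') * conj (v k')) * Dm d q m k
          = (d:ℂ)⁻¹ * ∑ k', conj (v k') * ∑ q : ZMod d × ZMod d, conj (Dm d q 0 k') * Dm d q m k := by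
            simp only [Finset.sum_mul, Finset.mul_sum]
            rw [Finset.sum_comm]
            exact Finset.sum_congr rfl fun k' _ => Finset.sum_congr rfl fun q _ => by ring
        _ = (d:ℂ)⁻¹ * ∑ k', conj (v k') * (if (0:ZMod d) = m ∧ k' = k then (d:ℂ) else 0) := by
            congr 1
            exact Finset.sum_congr rfl fun k' _ => by rw [Dm_complete]
        _ = Sv m k := by
            by_cases hm : (0:ZMod d) = m
            · simp only [hm, true_and, mul_ite, mul_zero, Finset.sum_ite_eq',
                Finset.mem_univ, if_true]
              rw [hSv]
              simp only [Matrix.of_apply, ← hm, if_pos rfl, one_mul]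
              field_simp
              simp
            · simp only [hm, false_and, if_false, mul_zero, Finset.sum_const_zero, mul_zero]
              rw [hSv]
              have : ¬ m = 0 := fun hh => hm hh.symm
              simp [this]
    have h2 : (Sv * ρ * Svᴴ).trace = star v ⬝ᵥ (ρ *ᵥ v) := by
      rw [Matrix.trace_mul_comm, ← Matrix.mul_assoc, Matrix.trace_mul_comm]
      have hSS : Svᴴ * Sv = Matrix.of fun a b => v a * conj (v b) := by
        ext a b
        simp only [Matrix.mul_apply, Matrix.conjTranspose_apply, Matrix.of_apply, hSv]
        have : ∀ m : ZMod d, star ((if m = (0:ZMod d) then (1:ℂ) else 0) * conj (v a)) *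
            ((if m = (0:ZMod d) then (1:ℂ) else 0) * conj (v b))
            = if m = (0:ZMod d) then v a * conj (v b) else 0 := by
          intro m
          by_cases hm : m = 0 <;> simp [hm]
        simp_rw [this]
        rw [Finset.sum_ite_eq' Finset.univ (0 : ZMod d) (fun _ => v a * conj (v b))]
        simp
      rw [hSS]
      rw [Matrix.trace]
      simp only [Matrix.diag_apply, Matrix.mul_apply, Matrix.of_apply, dotProduct,
        Matrix.mulVec, Pi.star_apply, Finset.mul_sum, starRingEnd_apply]
      exact Finset.sum_congr rfl fun a _ => Finset.sum_congr rfl fun b _ => by ring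
    have hdot : star x ⬝ᵥ ((Matrix.of fun p q : ZMod d × ZMod d =>
          (ρ * ((Dm d p)ᴴ * Dm d q)).trace) *ᵥ x)
        = ∑ p : ZMod d × ZMod d, ∑ q : ZMod d × ZMod d,
            (star (x p) * x q) * (ρ * ((Dm d p)ᴴ * Dm d q)).trace := by
      simp only [dotProduct, Matrix.mulVec, Pi.star_apply, Matrix.of_apply,
        Finset.mul_sum]
      exact Finset.sum_congr rfl fun p _ => Finset.sum_congr rfl fun q _ => by ring
    have := h.dotProduct_mulVec_nonneg x
    rw [hdot, ← quad d ρ x, hT, h2] at this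
    exact this
end
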